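/- arXiv:2601.10036 — 5 statements merged into one kernel-verified Lean document; each statement's English description precedes it below -/
import Mathlib

section
/- Let k1, k2 ≥ 0 be integers with k1 + k2 ≥ 1, let n = k1 + k2 + 3, and let T = DC(k1, k2, 3). Then λ₁(T) = √((n - 1 + √((k1-k2)² + 4))/2) and λ₂(T) = √((n - 1 - √((k1-k2)² + 4))/2). -/
open scoped Classical

/-- Adjacency matrix of a simple graph on `Fin n`, over `ℝ`. -/
noncomputable def adjMat {n : ℕ} (G : SimpleGraph (Fin n)) : Matrix (Fin n) (Fin n) ℝ :=
  fun i j => if G.Adj i j then 1 else 0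

/-- The eigenvalues (roots of the characteristic polynomial, with multiplicity)
of the adjacency matrix, sorted in nondecreasing order. -/
noncomputable def eigList {n : ℕ} (G : SimpleGraph (Fin n)) : List ℝ :=
  (Matrix.charpoly (adjMat G)).roots.sort (· ≤ ·)

/-- `lam k G` is the `k`-th largest adjacency eigenvalue of `G` (so `lam 1` is `λ₁`). -/
noncomputable def lam {n : ℕ} (k : ℕ) (G : SimpleGraph (Fin n)) : ℝ :=
  (eigList G).getD (n - k) 0

/-- The double comet `DC(k1, k2, l)`: a path on `l` vertices (the vertices `0, …, l-1`),
with `k1` pendant leaves attached to the terminal vertex `0` and `k2` pendant leaves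
attached to the terminal vertex `l - 1`. -/
def doubleComet (k1 k2 l : ℕ) : SimpleGraph (Fin (k1 + k2 + l)) :=
  SimpleGraph.fromRel (fun i j =>
    ((i : ℕ) + 1 = (j : ℕ) ∧ (j : ℕ) < l) ∨
    (l ≤ (i : ℕ) ∧ (i : ℕ) < l + k1 ∧ (j : ℕ) = 0) ∨
    (l + k1 ≤ (i : ℕ) ∧ (j : ℕ) = l - 1))

/-- Degree of a vertex. -/
noncomputable def deg {n : ℕ} (G : SimpleGraph (Fin n)) (u : Fin n) : ℕ :=
  (Finset.univ.filter (fun w => G.Adj u w)).card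
open Matrix Polynomial

noncomputable def coreA : Matrix (Fin 3) (Fin 3) ℝ :=
  fun i j => if (i : ℕ) + 1 = (j : ℕ) ∨ (j : ℕ) + 1 = (i : ℕ) then 1 else 0

noncomputable def Bmat (k1 k2 : ℕ) : Matrix (Fin 3) (Fin k1 ⊕ Fin k2) ℝ :=
  fun i j => match j with
    | .inl _ => if (i : ℕ) = 0 then 1 else 0
    | .inr _ => if (i : ℕ) = 2 then 1 else 0

noncomputable def M0 (k1 k2 : ℕ) : Matrix (Fin 3 ⊕ (Fin k1 ⊕ Fin k2)) (Fin 3 ⊕ (Fin k1 ⊕ Fin k2)) ℝ :=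
  Matrix.fromBlocks coreA (Bmat k1 k2) (Bmat k1 k2)ᵀ 0

def ee (k1 k2 : ℕ) : (Fin 3 ⊕ (Fin k1 ⊕ Fin k2)) ≃ Fin (k1 + k2 + 3) :=
  ((Equiv.sumCongr (Equiv.refl (Fin 3)) finSumFinEquiv).trans finSumFinEquiv).trans
    (finCongr (by omega))

lemma ee_val_inl (k1 k2 : ℕ) (i : Fin 3) : ((ee k1 k2 (Sum.inl i)) : ℕ) = i := by
  simp [ee]

lemma ee_val_inr_inl (k1 k2 : ℕ) (j : Fin k1) :
    ((ee k1 k2 (Sum.inr (Sum.inl j))) : ℕ) = 3 + j := by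
  simp [ee]; omega

lemma ee_val_inr_inr (k1 k2 : ℕ) (j : Fin k2) :
    ((ee k1 k2 (Sum.inr (Sum.inr j))) : ℕ) = 3 + k1 + j := by
  simp [ee]; omega

lemma adj_eq (k1 k2 : ℕ) :
    adjMat (doubleComet k1 k2 3) = Matrix.reindex (ee k1 k2) (ee k1 k2) (M0 k1 k2) := by
  ext i j
  obtain ⟨a, rfl⟩ := (ee k1 k2).surjective i
  obtain ⟨b, rfl⟩ := (ee k1 k2).surjective j
  rw [Matrix.reindex_apply, Matrix.submatrix_apply, Equiv.symm_apply_apply,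
    Equiv.symm_apply_apply]
  rcases a with ai | aj | aj <;> rcases b with bi | bj | bj <;>
    simp only [adjMat, doubleComet, SimpleGraph.fromRel_adj, ne_eq, Fin.ext_iff,
      M0, Matrix.fromBlocks_apply₁₁, Matrix.fromBlocks_apply₁₂,
      Matrix.fromBlocks_apply₂₁, Matrix.fromBlocks_apply₂₂, Matrix.transpose_apply,
      coreA, Bmat, Matrix.zero_apply, ee_val_inl, ee_val_inr_inl, ee_val_inr_inr,
      Sum.elim_inl, Sum.elim_inr] <;>
    split_ifs <;> first | rfl | (exfalso; omega)

noncomputable def Qmat (k1 k2 : ℕ) : Matrix (Fin 3) (Fin 3) ℝ :=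
  Matrix.of ![![(k1 : ℝ), 0, 0], ![0, 0, 0], ![0, 0, (k2 : ℝ)]]

lemma BBT (k1 k2 : ℕ) : Bmat k1 k2 * (Bmat k1 k2)ᵀ = Qmat k1 k2 := by
  ext i j
  fin_cases i <;> fin_cases j <;>
    simp [Matrix.mul_apply, Fintype.sum_sum_type, Bmat, Qmat, Finset.sum_const,
      Finset.card_univ, Matrix.vecHead, Matrix.vecTail]

lemma charpoly_M0 (k1 k2 : ℕ) (hk : 1 ≤ k1 + k2) :
    (M0 k1 k2).charpoly =
      X ^ (k1 + k2 - 1) *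
        (X ^ 4 - Polynomial.C ((k1 : ℝ) + (k2 : ℝ) + 2) * X ^ 2 +
          Polynomial.C ((k1 : ℝ) * (k2 : ℝ) + (k1 : ℝ) + (k2 : ℝ))) := by
  obtain ⟨m, hm⟩ : ∃ m, k1 + k2 = m + 1 := ⟨k1 + k2 - 1, by omega⟩
  set K := FractionRing (Polynomial ℝ)
  have hinj : Function.Injective (algebraMap (Polynomial ℝ) K) :=
    IsFractionRing.injective _ _
  apply hinj
  set φ := algebraMap (Polynomial ℝ) K with hφdef
  set ψ : ℝ →+* K := (φ : Polynomial ℝ →+* K).comp (Polynomial.C) with hψdef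
  set x : K := φ X with hxdef
  have hx : x ≠ 0 := by
    rw [hxdef, ← map_zero φ]
    exact fun h => X_ne_zero (hinj h)
  set c1 : K := ψ (k1 : ℝ) with hc1
  set c2 : K := ψ (k2 : ℝ) with hc2
  -- left side
  rw [Matrix.charpoly, RingHom.map_det, RingHom.mapMatrix_apply, M0,
    Matrix.charmatrix_fromBlocks, Matrix.fromBlocks_map]
  have hD : (charmatrix (0 : Matrix (Fin k1 ⊕ Fin k2) (Fin k1 ⊕ Fin k2) ℝ)).map φ =
      x • (1 : Matrix (Fin k1 ⊕ Fin k2) (Fin k1 ⊕ Fin k2) K) := by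
    ext i j
    by_cases h : i = j
    · subst h
      simp [Matrix.charmatrix_apply_eq, Matrix.map_apply, Matrix.smul_apply, Matrix.one_apply, hxdef]
    · simp [Matrix.charmatrix_apply_ne _ _ _ h, Matrix.map_apply, Matrix.smul_apply,
        Matrix.one_apply, h]
  rw [hD]
  letI : Invertible (x • (1 : Matrix (Fin k1 ⊕ Fin k2) (Fin k1 ⊕ Fin k2) K)) :=
    ⟨x⁻¹ • (1 : Matrix (Fin k1 ⊕ Fin k2) (Fin k1 ⊕ Fin k2) K),
      by rw [Matrix.smul_mul, Matrix.mul_smul, smul_smul, inv_mul_cancel₀ hx, Matrix.one_mul,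
        one_smul],
      by rw [Matrix.smul_mul, Matrix.mul_smul, smul_smul, mul_inv_cancel₀ hx, Matrix.one_mul,
        one_smul]⟩
  rw [Matrix.det_fromBlocks₂₂]
  have hinv : ⅟(x • (1 : Matrix (Fin k1 ⊕ Fin k2) (Fin k1 ⊕ Fin k2) K)) =
      x⁻¹ • (1 : Matrix (Fin k1 ⊕ Fin k2) (Fin k1 ⊕ Fin k2) K) := rfl
  rw [hinv]
  -- the Schur complement
  have hBC : ((-(Bmat k1 k2).map Polynomial.C).map φ) *
        (x⁻¹ • (1 : Matrix (Fin k1 ⊕ Fin k2) (Fin k1 ⊕ Fin k2) K)) *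
        ((-((Bmat k1 k2)ᵀ).map Polynomial.C).map φ) =
      x⁻¹ • ((Qmat k1 k2).map ψ) := by
    rw [Matrix.mul_smul, Matrix.mul_one, Matrix.smul_mul]
    congr 1
    have : ∀ (M : Matrix (Fin 3) (Fin k1 ⊕ Fin k2) ℝ),
        ((-M.map Polynomial.C).map φ) = -(M.map ψ) := by
      intro M; ext i j; simp [Matrix.map_apply, hψdef]
    rw [this]
    have h2 : ((-((Bmat k1 k2)ᵀ).map Polynomial.C).map φ) = -((Bmat k1 k2).map ψ)ᵀ := by
      ext i j; simp [Matrix.map_apply, hψdef]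
    rw [h2, Matrix.neg_mul, Matrix.mul_neg, neg_neg, ← Matrix.transpose_map, ← Matrix.map_mul,
      BBT]
  rw [hBC]
  have hdetD : (x • (1 : Matrix (Fin k1 ⊕ Fin k2) (Fin k1 ⊕ Fin k2) K)).det = x ^ (k1 + k2) := by
    rw [Matrix.det_smul, Matrix.det_one, mul_one]
    congr 1
    simp [Fintype.card_sum]
  rw [hdetD]
  -- compute the Schur complement matrix explicitly
  have hS : (charmatrix coreA).map φ - x⁻¹ • ((Qmat k1 k2).map ψ) =
      Matrix.of ![![x - x⁻¹ * c1, -1, 0], ![-1, x, -1], ![0, -1, x - x⁻¹ * c2]] := by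
    ext i j
    fin_cases i <;> fin_cases j <;>
      simp [charmatrix, coreA, Qmat, Matrix.map_apply, Matrix.smul_apply, Matrix.sub_apply,
        Matrix.scalar_apply, Matrix.diagonal_apply, hxdef, hψdef, hc1, hc2, mul_comm,
        Matrix.vecHead, Matrix.vecTail]
  rw [hS]
  rw [Matrix.det_fin_three]
  -- right side
  simp only [_root_.map_mul, map_add, map_sub, map_pow, map_ofNat, Matrix.cons_val',
    Matrix.cons_val_zero, Matrix.cons_val_one, Matrix.head_cons, Matrix.head_fin_const,
    Matrix.cons_val_fin_one, Matrix.empty_val', Matrix.of_apply, Matrix.cons_val_two,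
    Matrix.tail_cons]
  rw [hm]
  have hmm : m + 1 - 1 = m := by omega
  rw [hmm]
  rw [show φ X = x from rfl, show φ (Polynomial.C ((k1 : ℝ))) = c1 from rfl,
    show φ (Polynomial.C ((k2 : ℝ))) = c2 from rfl, pow_succ]
  have hxx : x * x⁻¹ = 1 := mul_inv_cancel₀ hx
  linear_combination (x ^ m * c1 + x ^ m * c2 + x ^ m * c1 * c2 * (x * x⁻¹ + 1) - x ^ (m + 2) * c1 - x ^ (m + 2) * c2) * hxx

lemma sorted_aux (a b : ℝ) (h0a : 0 ≤ a) (hab : a ≤ b) :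
    ∀ m : ℕ, List.Pairwise (· ≤ ·) (List.replicate m (0:ℝ) ++ [a, b]) := by
  intro m
  induction m with
  | zero => simp [List.pairwise_cons, hab]
  | succ m ih =>
    rw [List.replicate_succ, List.cons_append]
    refine List.pairwise_cons.2 ⟨?_, ih⟩
    intro x hx
    simp only [List.mem_append, List.mem_replicate, List.mem_cons, List.mem_singleton,
      List.not_mem_nil, or_false] at hx
    rcases hx with ⟨-, rfl⟩ | rfl | rfl
    · exact le_refl 0
    · exact h0a
    · exact h0a.trans hab

/-- The two largest adjacency eigenvalues of the double comet `DC(k1, k2, 3)`. -/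
theorem lam_doubleComet_three (k1 k2 : ℕ) (hk : 1 ≤ k1 + k2) :
    lam 1 (doubleComet k1 k2 3) =
      Real.sqrt ((((k1 + k2 + 3 : ℕ) : ℝ) - 1 +
        Real.sqrt (((k1 : ℝ) - (k2 : ℝ)) ^ 2 + 4)) / 2) ∧
    lam 2 (doubleComet k1 k2 3) =
      Real.sqrt ((((k1 + k2 + 3 : ℕ) : ℝ) - 1 -
        Real.sqrt (((k1 : ℝ) - (k2 : ℝ)) ^ 2 + 4)) / 2) := by
  have hc3 : (((k1 + k2 + 3 : ℕ) : ℝ)) = (k1 : ℝ) + (k2 : ℝ) + 3 := by push_cast; ring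
  have hk1 : (1:ℝ) ≤ (k1:ℝ) + (k2:ℝ) := by exact_mod_cast hk
  set s : ℝ := Real.sqrt (((k1:ℝ) - (k2:ℝ))^2 + 4) with hs
  have hs0 : 0 < s := Real.sqrt_pos.2 (by positivity)
  have hs2 : s^2 = ((k1:ℝ) - (k2:ℝ))^2 + 4 := Real.sq_sqrt (by positivity)
  set μp : ℝ := (((k1:ℝ) + (k2:ℝ) + 3) - 1 + s)/2 with hμpd
  set μm : ℝ := (((k1:ℝ) + (k2:ℝ) + 3) - 1 - s)/2 with hμmd
  have hμm : 0 < μm := by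
    rw [hμmd]
    have : s < (k1:ℝ) + (k2:ℝ) + 2 := by nlinarith
    linarith
  have hμp : 0 < μp := by rw [hμpd]; linarith
  have hμmp : μm < μp := by rw [hμpd, hμmd]; linarith
  set rp : ℝ := Real.sqrt μp with hrpd
  set rm : ℝ := Real.sqrt μm with hrmd
  have hrm0 : 0 < rm := Real.sqrt_pos.2 hμm
  have hrp0 : 0 < rp := Real.sqrt_pos.2 hμp
  have hrmp : rm < rp := Real.sqrt_lt_sqrt hμm.le hμmp
  have hrp2 : rp^2 = μp := Real.sq_sqrt hμp.le
  have hrm2 : rm^2 = μm := Real.sq_sqrt hμm.le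
  have hsum : μp + μm = (k1:ℝ) + (k2:ℝ) + 2 := by rw [hμpd, hμmd]; ring
  have hprod : μp * μm = (k1:ℝ) * (k2:ℝ) + (k1:ℝ) + (k2:ℝ) := by
    rw [hμpd, hμmd]
    nlinarith [hs2]
  have hcp : (adjMat (doubleComet k1 k2 3)).charpoly =
      X ^ (k1+k2-1) * ((X - Polynomial.C rp) * (X + Polynomial.C rp) *
        ((X - Polynomial.C rm) * (X + Polynomial.C rm))) := by
    rw [adj_eq, Matrix.charpoly_reindex, charpoly_M0 k1 k2 hk]
    congr 1
    have e1 : (X - Polynomial.C rp) * (X + Polynomial.C rp) = X^2 - Polynomial.C μp := by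
      rw [← hrp2, map_pow]; ring
    have e2 : (X - Polynomial.C rm) * (X + Polynomial.C rm) = X^2 - Polynomial.C μm := by
      rw [← hrm2, map_pow]; ring
    rw [e1, e2, ← hsum, ← hprod, map_add, _root_.map_mul]
    ring
  have hroots : (adjMat (doubleComet k1 k2 3)).charpoly.roots =
      (k1+k2-1) • ({0} : Multiset ℝ) + ({rp} + {-rp} + ({rm} + {-rm})) := by
    rw [hcp]
    have h1 : (X - Polynomial.C rp) ≠ 0 := Polynomial.X_sub_C_ne_zero rp
    have h2 : (X + Polynomial.C rp) = X - Polynomial.C (-rp) := by rw [map_neg, sub_neg_eq_add]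
    have h3 : (X + Polynomial.C rm) = X - Polynomial.C (-rm) := by rw [map_neg, sub_neg_eq_add]
    rw [h2, h3]
    rw [Polynomial.roots_mul, Polynomial.roots_mul, Polynomial.roots_mul, Polynomial.roots_mul,
      Polynomial.roots_pow, Polynomial.roots_X, Polynomial.roots_X_sub_C,
      Polynomial.roots_X_sub_C, Polynomial.roots_X_sub_C, Polynomial.roots_X_sub_C]
    · exact mul_ne_zero (Polynomial.X_sub_C_ne_zero rm) (Polynomial.X_sub_C_ne_zero (-rm))
    · exact mul_ne_zero (Polynomial.X_sub_C_ne_zero rp) (Polynomial.X_sub_C_ne_zero (-rp))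
    · exact mul_ne_zero (mul_ne_zero (Polynomial.X_sub_C_ne_zero rp)
        (Polynomial.X_sub_C_ne_zero (-rp))) (mul_ne_zero (Polynomial.X_sub_C_ne_zero rm)
        (Polynomial.X_sub_C_ne_zero (-rm)))
    · exact mul_ne_zero (pow_ne_zero _ Polynomial.X_ne_zero)
        (mul_ne_zero (mul_ne_zero (Polynomial.X_sub_C_ne_zero rp)
          (Polynomial.X_sub_C_ne_zero (-rp))) (mul_ne_zero (Polynomial.X_sub_C_ne_zero rm)
          (Polynomial.X_sub_C_ne_zero (-rm))))
  set L : List ℝ := (-rp) :: (-rm) :: (List.replicate (k1+k2-1) 0 ++ [rm, rp]) with hLd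
  have hL : eigList (doubleComet k1 k2 3) = L := by
    unfold eigList
    refine (fun hp hs => List.Perm.eq_of_pairwise' (Multiset.pairwise_sort _ _) hs hp) (Multiset.coe_eq_coe.1 ?_) ?_
    · rw [Multiset.sort_eq, hroots, hLd]
      rw [← Multiset.cons_coe, ← Multiset.cons_coe, ← Multiset.coe_add,
        Multiset.coe_replicate, ← Multiset.nsmul_singleton]
      rw [← Multiset.singleton_add, ← Multiset.singleton_add]
      have : (↑([rm, rp] : List ℝ) : Multiset ℝ) = {rm} + {rp} := rfl
      rw [this]
      abel
    · rw [hLd]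
      refine List.pairwise_cons.2 ⟨?_, List.pairwise_cons.2 ⟨?_, sorted_aux rm rp hrm0.le hrmp.le _⟩⟩
      · intro b hb
        simp only [List.mem_cons, List.mem_append, List.mem_replicate, List.mem_singleton,
          List.not_mem_nil, or_false] at hb
        rcases hb with rfl | ⟨-, rfl⟩ | rfl | rfl
        · linarith
        · linarith
        · linarith
        · linarith
      · intro b hb
        simp only [List.mem_append, List.mem_replicate, List.mem_cons, List.mem_singleton,
          List.not_mem_nil, or_false] at hb
        rcases hb with ⟨-, rfl⟩ | rfl | rfl
        · linarith
        · linarith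
        · linarith
  -- final index computations
  obtain ⟨m, hm⟩ : ∃ m, k1 + k2 = m + 1 := ⟨k1 + k2 - 1, by omega⟩
  have hgetp : lam 1 (doubleComet k1 k2 3) = rp := by
    show (eigList (doubleComet k1 k2 3)).getD (k1 + k2 + 3 - 1) 0 = rp
    rw [hL, hLd, show k1 + k2 + 3 - 1 = ((m + 1) + 1) + 1 from by omega,
      List.getD_cons_succ, List.getD_cons_succ,
      show k1 + k2 - 1 = m from by omega]
    rw [List.getD_append_right _ _ _ _ (by simp [List.length_replicate])]
    simp [List.length_replicate, show m + 1 - m = 1 from by omega]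
  have hgetm : lam 2 (doubleComet k1 k2 3) = rm := by
    show (eigList (doubleComet k1 k2 3)).getD (k1 + k2 + 3 - 2) 0 = rm
    rw [hL, hLd, show k1 + k2 + 3 - 2 = (m + 1) + 1 from by omega,
      List.getD_cons_succ, List.getD_cons_succ,
      show k1 + k2 - 1 = m from by omega]
    rw [List.getD_append_right _ _ _ _ (by simp [List.length_replicate])]
    simp [List.length_replicate]
  rw [hgetp, hgetm, hrpd, hrmd, hμpd, hμmd, hc3, hs]
  exact ⟨rfl, rfl⟩
end

section
/- Let k1, k2 ≥ 0 be integers with k1 + k2 ≥ 1 and let n = k1 + k2 + 3. Then the characteristic polynomial of the adjacency matrix of the double comet DC(k1, k2, 3) equals x^(n-4)·(x⁴ - (n-1)x² + k1·k2 + k1 + k2). -/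
open scoped Classical

open Polynomial Matrix in
lemma evalCharpolyAux {N : ℕ} (M : Matrix (Fin N) (Fin N) ℝ) (r : ℝ) :
    M.charpoly.eval r = (Matrix.diagonal (fun _ => r) - M).det := by
  rw [Matrix.charpoly, _root_.eval_det, Matrix.matPolyEquiv_charmatrix, eval_sub, eval_X, eval_C, Matrix.scalar_apply]

lemma adjMat_doubleComet (k1 k2 : ℕ) (u v : Fin (k1 + k2 + 3)) :
    adjMat (doubleComet k1 k2 3) u v =
      if ((u:ℕ)+1 = (v:ℕ) ∧ (v:ℕ) < 3) ∨ ((v:ℕ)+1 = (u:ℕ) ∧ (u:ℕ) < 3)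
        ∨ ((u:ℕ) = 0 ∧ 3 ≤ (v:ℕ) ∧ (v:ℕ) < 3+k1) ∨ ((v:ℕ) = 0 ∧ 3 ≤ (u:ℕ) ∧ (u:ℕ) < 3+k1)
        ∨ ((u:ℕ) = 2 ∧ 3+k1 ≤ (v:ℕ)) ∨ ((v:ℕ) = 2 ∧ 3+k1 ≤ (u:ℕ)) then 1 else 0 := by
  have h : (doubleComet k1 k2 3).Adj u v ↔
      (((u:ℕ)+1 = (v:ℕ) ∧ (v:ℕ) < 3) ∨ ((v:ℕ)+1 = (u:ℕ) ∧ (u:ℕ) < 3)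
        ∨ ((u:ℕ) = 0 ∧ 3 ≤ (v:ℕ) ∧ (v:ℕ) < 3+k1) ∨ ((v:ℕ) = 0 ∧ 3 ≤ (u:ℕ) ∧ (u:ℕ) < 3+k1)
        ∨ ((u:ℕ) = 2 ∧ 3+k1 ≤ (v:ℕ)) ∨ ((v:ℕ) = 2 ∧ 3+k1 ≤ (u:ℕ))) := by
    rw [doubleComet, SimpleGraph.fromRel_adj, ne_eq, Fin.ext_iff]
    omega
  unfold adjMat
  exact if_congr h rfl rfl

lemma count_lt (k1 k2 : ℕ) :
    ∑ j : Fin (k1 + k2), (if (j:ℕ) < k1 then (1:ℝ) else 0) = k1 := by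
  rw [Fin.sum_univ_eq_sum_range (fun i => if i < k1 then (1:ℝ) else 0) (k1+k2),
    Finset.range_eq_Ico,
    ← Finset.sum_Ico_consecutive _ (Nat.zero_le k1) (Nat.le_add_right k1 k2)]
  rw [Finset.sum_congr rfl (fun i hi => if_pos (Finset.mem_Ico.mp hi).2),
    Finset.sum_congr rfl (fun i hi => if_neg (by
      have := (Finset.mem_Ico.mp hi).1; omega))]
  simp

lemma count_ge (k1 k2 : ℕ) :
    ∑ j : Fin (k1 + k2), (if k1 ≤ (j:ℕ) then (1:ℝ) else 0) = k2 := by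
  rw [Fin.sum_univ_eq_sum_range (fun i => if k1 ≤ i then (1:ℝ) else 0) (k1+k2),
    Finset.range_eq_Ico,
    ← Finset.sum_Ico_consecutive _ (Nat.zero_le k1) (Nat.le_add_right k1 k2)]
  rw [Finset.sum_congr rfl (fun i hi => if_neg (by
      have := (Finset.mem_Ico.mp hi).2; omega)),
    Finset.sum_congr rfl (fun i hi => if_pos (Finset.mem_Ico.mp hi).1)]
  simp

open Polynomial Matrix in
/-- The characteristic polynomial of `DC(k1, k2, 3)` is
`x^(n-4) (x⁴ - (n-1) x² + k1 k2 + k1 + k2)` where `n = k1 + k2 + 3`. -/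
theorem charpoly_doubleComet_three (k1 k2 : ℕ) (hk : 1 ≤ k1 + k2) :
    Matrix.charpoly (adjMat (doubleComet k1 k2 3)) =
      Polynomial.X ^ (k1 + k2 + 3 - 4) *
        (Polynomial.X ^ 4 -
          Polynomial.C (((k1 + k2 + 3 : ℕ) : ℝ) - 1) * Polynomial.X ^ 2 +
          Polynomial.C ((k1 : ℝ) * k2 + k1 + k2)) := by
  apply Polynomial.eq_of_infinite_eval_eq
  refine Set.Infinite.mono ?_ ((Set.finite_singleton (0:ℝ)).infinite_compl)
  intro x hx
  have hx0 : x ≠ 0 := by simpa using hx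
  rw [Set.mem_setOf_eq, evalCharpolyAux]
  set e : Fin 3 ⊕ Fin (k1+k2) ≃ Fin (k1+k2+3) :=
    finSumFinEquiv.trans (finCongr (by omega)) with he
  have hl : ∀ i : Fin 3, ((e (Sum.inl i) : ℕ)) = (i : ℕ) := by
    intro i; simp [he]
  have hr : ∀ j : Fin (k1+k2), ((e (Sum.inr j) : ℕ)) = 3 + (j : ℕ) := by
    intro j; simp [he]; omega
  rw [← Matrix.det_submatrix_equiv_self e]
  set B : Matrix (Fin 3) (Fin (k1+k2)) ℝ :=
    Matrix.of fun i j =>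
      if ((i:ℕ) = 0 ∧ (j:ℕ) < k1) ∨ ((i:ℕ) = 2 ∧ k1 ≤ (j:ℕ)) then (-1:ℝ) else 0 with hB
  have hsub : (Matrix.diagonal (fun _ => x) - adjMat (doubleComet k1 k2 3)).submatrix e e
      = Matrix.fromBlocks !![x,-1,0;-1,x,-1;0,-1,x] B Bᵀ (Matrix.diagonal fun _ => x) := by
    ext s t
    rcases s with i | j <;> rcases t with i' | j' <;>
      simp only [Matrix.submatrix_apply, Matrix.sub_apply, Matrix.diagonal_apply,
        adjMat_doubleComet, hl, hr, EmbeddingLike.apply_eq_iff_eq, Matrix.of_apply,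
        Matrix.fromBlocks_apply₁₁, Matrix.fromBlocks_apply₁₂, Matrix.fromBlocks_apply₂₁,
        Matrix.fromBlocks_apply₂₂, Matrix.transpose_apply, Sum.inl.injEq, Sum.inr.injEq,
        hB]
    · fin_cases i <;> fin_cases i' <;> norm_num <;>
        first
          | omega
          | (rw [if_pos (by omega)]; norm_num)
          | (rw [if_neg (by omega)]; norm_num)
          | (split_ifs <;> first | (norm_num; done) | omega | simp_all)
          | (intro h; exact absurd h (by decide))
          | (have h1 := Nat.cast_nonneg (α := ℝ) k1
             have h2 := Nat.cast_nonneg (α := ℝ) k2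
             linarith)
    · fin_cases i <;> norm_num <;>
        split_ifs <;> first | (norm_num; done) | omega | simp_all
    · fin_cases i' <;> norm_num <;>
        split_ifs <;> first | (norm_num; done) | omega | simp_all
    · norm_num
      first
        | omega
        | (split_ifs <;> first | (norm_num; done) | omega | simp_all)
  rw [hsub]
  letI : Invertible (Matrix.diagonal fun _ : Fin (k1+k2) => x) :=
    ⟨Matrix.diagonal fun _ => x⁻¹,
      by rw [Matrix.diagonal_mul_diagonal]; simp [inv_mul_cancel₀ hx0],
      by rw [Matrix.diagonal_mul_diagonal]; simp [mul_inv_cancel₀ hx0]⟩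
  rw [Matrix.det_fromBlocks₂₂]
  have hinv : ⅟(Matrix.diagonal fun _ : Fin (k1+k2) => x) = Matrix.diagonal fun _ => x⁻¹ :=
    invOf_eq_right_inv (by rw [Matrix.diagonal_mul_diagonal]; simp [mul_inv_cancel₀ hx0])
  rw [hinv]
  have hBD : B * (Matrix.diagonal fun _ : Fin (k1+k2) => x⁻¹) * Bᵀ =
      !![x⁻¹ * k1, 0, 0; 0, 0, 0; 0, 0, x⁻¹ * k2] := by
    ext i i'
    rw [Matrix.mul_apply]
    simp only [Matrix.mul_diagonal, Matrix.transpose_apply, hB, Matrix.of_apply]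
    fin_cases i <;> fin_cases i' <;> norm_num
    · trans (∑ j : Fin (k1+k2), x⁻¹ * (if (j:ℕ) < k1 then (1:ℝ) else 0))
      · exact Finset.sum_congr rfl (fun j _ => by split_ifs <;> ring)
      · rw [← Finset.mul_sum, count_lt]
    · trans (∑ _j : Fin (k1+k2), (0:ℝ))
      · exact Finset.sum_congr rfl (fun j _ => by split_ifs <;> first | ring1 | (exfalso; omega))
      · simp
    · trans (∑ _j : Fin (k1+k2), (0:ℝ))
      · exact Finset.sum_congr rfl (fun j _ => by split_ifs <;> first | ring1 | (exfalso; omega))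
      · simp
    · trans (∑ j : Fin (k1+k2), x⁻¹ * (if k1 ≤ (j:ℕ) then (1:ℝ) else 0))
      · exact Finset.sum_congr rfl (fun j _ => by split_ifs <;> first | ring1 | (exfalso; omega))
      · rw [← Finset.mul_sum, count_ge]
  have hS : !![x,-1,0;-1,x,-1;0,-1,x] - B * (Matrix.diagonal fun _ : Fin (k1+k2) => x⁻¹) * Bᵀ
      = !![x - x⁻¹ * k1, -1, 0; -1, x, -1; 0, -1, x - x⁻¹ * k2] := by
    rw [hBD]
    ext i i'
    fin_cases i <;> fin_cases i' <;> norm_num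
  rw [hS]
  have hdetD : (Matrix.diagonal fun _ : Fin (k1+k2) => x).det = x ^ (k1+k2) := by
    simp
  rw [hdetD, Matrix.det_fin_three]
  simp only [Polynomial.eval_mul, Polynomial.eval_pow, Polynomial.eval_add, Polynomial.eval_sub,
    Polynomial.eval_X, Polynomial.eval_C]
  norm_num
  have hpow : x ^ (k1 + k2) = x ^ (k1 + k2 + 3 - 4) * x := by
    rw [← pow_succ]
    congr 1
    omega
  rw [hpow]
  push_cast
  field_simp
  ring
end

section
/- Let k1, k2 ≥ 0 be integers with k1 + k2 ≥ 2 and let n = k1 + k2 + 2. Then the characteristic polynomial of the adjacency matrix of the double comet DC(k1, k2, 2) equals x^(n-4)·(x⁴ - (n-1)x² + k1·k2). -/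
open scoped Classical

open Matrix Polynomial in
private lemma dc_BBt (k1 k2 : ℕ) (a b : Fin 2) :
    ((Matrix.of (fun (i : Fin 2) (j : Fin (k1+k2)) =>
        if ((i : ℕ) = 0 ↔ (j : ℕ) < k1) then (-1 : ℝ) else 0)) *
      (Matrix.of (fun (i : Fin 2) (j : Fin (k1+k2)) =>
        if ((i : ℕ) = 0 ↔ (j : ℕ) < k1) then (-1 : ℝ) else 0))ᵀ) a b =
      if (a : ℕ) = 0 ∧ (b : ℕ) = 0 then (k1 : ℝ)
      else if (a : ℕ) = 1 ∧ (b : ℕ) = 1 then (k2 : ℝ) else 0 := by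
  rw [Matrix.mul_apply]
  simp only [Matrix.transpose_apply, Matrix.of_apply]
  have hc1 : (Finset.range (k1+k2)).filter (fun j => j < k1) = Finset.range k1 := by
    ext j; simp; omega
  have hc2 : ((Finset.range (k1+k2)).filter (fun j => ¬ j < k1)).card = k2 := by
    rw [Finset.filter_not, Finset.card_sdiff_of_subset (Finset.filter_subset _ _), hc1]
    simp
  have hcount1 : (∑ j : Fin (k1+k2), if (j:ℕ) < k1 then (1:ℝ) else 0) = k1 := by
    rw [Fin.sum_univ_eq_sum_range (fun j => if j < k1 then (1:ℝ) else 0), ← Finset.sum_filter,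
      Finset.sum_const, nsmul_eq_mul, mul_one, hc1, Finset.card_range]
  have hcount2 : (∑ j : Fin (k1+k2), if ¬ (j:ℕ) < k1 then (1:ℝ) else 0) = k2 := by
    rw [Fin.sum_univ_eq_sum_range (fun j => if ¬ j < k1 then (1:ℝ) else 0), ← Finset.sum_filter,
      Finset.sum_const, nsmul_eq_mul, mul_one, hc2]
  obtain ha | ha : (a:ℕ) = 0 ∨ (a:ℕ) = 1 := by omega
  all_goals obtain hb | hb : (b:ℕ) = 0 ∨ (b:ℕ) = 1 := by omega
  all_goals rw [ha, hb]
  · rw [if_pos ⟨rfl, rfl⟩]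
    trans (∑ j : Fin (k1+k2), if (j:ℕ) < k1 then (1:ℝ) else 0)
    · exact Finset.sum_congr rfl fun j _ => by
        split_ifs <;> (first | ring1 | (exfalso; simp_all; omega) | (exfalso; simp_all))
    · exact hcount1
  · rw [if_neg (by omega), if_neg (by omega)]
    trans (∑ _j : Fin (k1+k2), (0:ℝ))
    · exact Finset.sum_congr rfl fun j _ => by
        split_ifs <;> (first | ring1 | (exfalso; simp_all; omega) | (exfalso; simp_all))
    · simp
  · rw [if_neg (by omega), if_neg (by omega)]
    trans (∑ _j : Fin (k1+k2), (0:ℝ))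
    · exact Finset.sum_congr rfl fun j _ => by
        split_ifs <;> (first | ring1 | (exfalso; simp_all; omega) | (exfalso; simp_all))
    · simp
  · rw [if_neg (by omega), if_pos ⟨rfl, rfl⟩]
    trans (∑ j : Fin (k1+k2), if ¬ (j:ℕ) < k1 then (1:ℝ) else 0)
    · exact Finset.sum_congr rfl fun j _ => by
        split_ifs <;> (first | ring1 | (exfalso; simp_all; omega) | (exfalso; simp_all))
    · exact hcount2

open Matrix Polynomial in
private lemma dc_detBlocks (k1 k2 : ℕ) (hk : 2 ≤ k1 + k2) (x : ℝ) (hx : x ≠ 0) :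
    (Matrix.fromBlocks
        (Matrix.of (fun (i j : Fin 2) => if (i : ℕ) = (j : ℕ) then x else -1))
        (Matrix.of (fun (i : Fin 2) (j : Fin (k1+k2)) =>
          if ((i : ℕ) = 0 ↔ (j : ℕ) < k1) then (-1 : ℝ) else 0))
        (Matrix.of (fun (i : Fin 2) (j : Fin (k1+k2)) =>
          if ((i : ℕ) = 0 ↔ (j : ℕ) < k1) then (-1 : ℝ) else 0))ᵀ
        (x • (1 : Matrix (Fin (k1+k2)) (Fin (k1+k2)) ℝ))).det =
      x ^ (k1 + k2 - 2) * (x^4 - (k1 + k2 + 1 : ℝ) * x^2 + (k1 : ℝ) * k2) := by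
  set B : Matrix (Fin 2) (Fin (k1 + k2)) ℝ :=
    Matrix.of (fun i j => if ((i : ℕ) = 0 ↔ (j : ℕ) < k1) then (-1 : ℝ) else 0) with hB
  set A2 : Matrix (Fin 2) (Fin 2) ℝ :=
    Matrix.of (fun i j => if (i : ℕ) = (j : ℕ) then x else -1) with hA2
  have hD : Invertible (x • (1 : Matrix (Fin (k1+k2)) (Fin (k1+k2)) ℝ)) :=
    ⟨x⁻¹ • 1, by rw [smul_mul_smul_comm, inv_mul_cancel₀ hx, one_mul, one_smul],
      by rw [smul_mul_smul_comm, mul_inv_cancel₀ hx, one_mul, one_smul]⟩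
  rw [Matrix.det_fromBlocks₂₂]
  have hinv : ⅟(x • (1 : Matrix (Fin (k1+k2)) (Fin (k1+k2)) ℝ))
      = x⁻¹ • (1 : Matrix (Fin (k1+k2)) (Fin (k1+k2)) ℝ) := invOf_eq_right_inv
    (by rw [smul_mul_smul_comm, mul_inv_cancel₀ hx, one_mul, one_smul])
  rw [hinv]
  have hdetD : (x • (1 : Matrix (Fin (k1+k2)) (Fin (k1+k2)) ℝ)).det = x ^ (k1 + k2) := by
    simp [Matrix.det_smul]
  rw [hdetD]
  have hBB : B * (x⁻¹ • (1 : Matrix (Fin (k1+k2)) (Fin (k1+k2)) ℝ)) * Bᵀ = x⁻¹ • (B * Bᵀ) := by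
    rw [Matrix.mul_smul, Matrix.mul_one, Matrix.smul_mul]
  rw [hBB]
  have hS : (A2 - x⁻¹ • (B * Bᵀ)).det
      = (x - x⁻¹ * k1) * (x - x⁻¹ * k2) - 1 := by
    rw [Matrix.det_fin_two]
    simp only [Matrix.sub_apply, Matrix.smul_apply, smul_eq_mul, hB, dc_BBt, hA2,
      Matrix.of_apply]
    norm_num
  rw [hS]
  obtain ⟨m, hm⟩ : ∃ m, k1 + k2 = m + 2 := ⟨k1 + k2 - 2, by omega⟩
  rw [hm]
  have hm2 : m + 2 - 2 = m := by omega
  rw [hm2]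
  field_simp
  ring

open Polynomial Matrix in
private lemma eval_charpoly_dc (k1 k2 : ℕ) (hk : 2 ≤ k1 + k2) (x : ℝ) (hx : x ≠ 0) :
    Polynomial.eval x (Matrix.charpoly (adjMat (doubleComet k1 k2 2))) =
      x ^ (k1 + k2 - 2) * (x^4 - (k1 + k2 + 1 : ℝ) * x^2 + (k1 : ℝ) * k2) := by
  set M := adjMat (doubleComet k1 k2 2) with hM
  have h1 : Polynomial.eval x M.charpoly
      = ((Polynomial.evalRingHom x).mapMatrix M.charmatrix).det := by
    rw [Matrix.charpoly, ← RingHom.map_det]; rfl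
  have h2 : (Polynomial.evalRingHom x).mapMatrix M.charmatrix
      = x • (1 : Matrix _ _ ℝ) - M := by
    ext i j
    simp only [RingHom.mapMatrix_apply, Matrix.map_apply, Matrix.charmatrix_apply,
      Matrix.sub_apply, Matrix.smul_apply, Matrix.one_apply, Matrix.diagonal, Matrix.of_apply,
      coe_evalRingHom, eval_sub, eval_C, smul_eq_mul]
    by_cases h : i = j <;> simp [h]
  rw [h1, h2]
  set e : Fin 2 ⊕ Fin (k1 + k2) ≃ Fin (k1 + k2 + 2) :=
    finSumFinEquiv.trans (finCongr (by omega)) with he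
  have he1 : ∀ i : Fin 2, ((e (Sum.inl i)) : ℕ) = (i : ℕ) := by intro i; simp [he]
  have he2 : ∀ j : Fin (k1 + k2), ((e (Sum.inr j)) : ℕ) = 2 + (j : ℕ) := by
    intro j; simp [he]; omega
  have hadj : ∀ a b : Fin (k1+k2+2), (doubleComet k1 k2 2).Adj a b ↔
      ((a : ℕ) ≠ (b : ℕ) ∧
        (((a:ℕ) = 0 ∧ (b:ℕ) = 1) ∨ ((a:ℕ) = 1 ∧ (b:ℕ) = 0) ∨
         ((b:ℕ) = 0 ∧ 2 ≤ (a:ℕ) ∧ (a:ℕ) < 2 + k1) ∨ ((a:ℕ) = 0 ∧ 2 ≤ (b:ℕ) ∧ (b:ℕ) < 2 + k1) ∨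
         ((b:ℕ) = 1 ∧ 2 + k1 ≤ (a:ℕ)) ∨ ((a:ℕ) = 1 ∧ 2 + k1 ≤ (b:ℕ)))) := by
    intro a b
    rw [doubleComet, SimpleGraph.fromRel_adj]
    constructor
    · rintro ⟨hne, h | h⟩ <;>
      · refine ⟨fun hv => hne (Fin.ext hv), ?_⟩
        omega
    · rintro ⟨hne, h⟩
      refine ⟨fun hv => hne (congrArg Fin.val hv), ?_⟩
      omega
  have hblock : (x • (1 : Matrix (Fin (k1+k2+2)) _ ℝ) - M).submatrix e e
      = Matrix.fromBlocks
        (Matrix.of (fun (i j : Fin 2) => if (i : ℕ) = (j : ℕ) then x else -1))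
        (Matrix.of (fun (i : Fin 2) (j : Fin (k1+k2)) =>
          if ((i : ℕ) = 0 ↔ (j : ℕ) < k1) then (-1 : ℝ) else 0))
        (Matrix.of (fun (i : Fin 2) (j : Fin (k1+k2)) =>
          if ((i : ℕ) = 0 ↔ (j : ℕ) < k1) then (-1 : ℝ) else 0))ᵀ
        (x • (1 : Matrix (Fin (k1+k2)) (Fin (k1+k2)) ℝ)) := by
    ext i j
    rcases i with i | i <;> rcases j with j | j <;>
      (have hi' := i.isLt; have hj' := j.isLt) <;>
      simp only [Matrix.submatrix_apply, Matrix.sub_apply, Matrix.smul_apply, Matrix.one_apply,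
        smul_eq_mul, hM, adjMat, Matrix.fromBlocks, Matrix.of_apply, Sum.elim_inl, Sum.elim_inr,
        Matrix.transpose_apply, hadj, Fin.ext_iff, he1, he2] <;>
      split_ifs <;>
      (first | ring1 | (exfalso; omega))
  rw [← Matrix.det_submatrix_equiv_self e, hblock]
  exact dc_detBlocks k1 k2 hk x hx

/-- The characteristic polynomial of `DC(k1, k2, 2)` is
`x^(n-4) (x⁴ - (n-1) x² + k1 k2)` where `n = k1 + k2 + 2`. -/
theorem charpoly_doubleComet_two (k1 k2 : ℕ) (hk : 2 ≤ k1 + k2) :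
    Matrix.charpoly (adjMat (doubleComet k1 k2 2)) =
      Polynomial.X ^ (k1 + k2 + 2 - 4) *
        (Polynomial.X ^ 4 -
          Polynomial.C (((k1 + k2 + 2 : ℕ) : ℝ) - 1) * Polynomial.X ^ 2 +
          Polynomial.C ((k1 : ℝ) * k2)) := by
  apply Polynomial.eq_of_infinite_eval_eq
  have hinf : {x : ℝ | x ≠ 0}.Infinite := by
    have h := (Set.finite_singleton (0:ℝ)).infinite_compl
    convert h using 1
    ext y; simp
  apply hinf.mono
  intro x hx
  have hx' : x ≠ 0 := hx
  simp only [Set.mem_setOf_eq]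
  rw [eval_charpoly_dc k1 k2 hk x hx']
  have h4 : k1 + k2 + 2 - 4 = k1 + k2 - 2 := by omega
  simp only [Polynomial.eval_mul, Polynomial.eval_pow, Polynomial.eval_X, Polynomial.eval_add,
    Polynomial.eval_sub, Polynomial.eval_C, h4]
  push_cast
  ring
end

section
/- Let T be a tree, let x be the unit eigenvector with positive entries of the adjacency matrix of T for the eigenvalue λ₁(T), and let y be any unit eigenvector for the eigenvalue λ₂(T). Suppose u, v, w are vertices of T with u adjacent to v, v adjacent to w, and u ≠ w, and let T' be the graph obtained from T by deleting the edge vw and adding the edge uw. Fix α ≥ 1/2. If α·x_w·(x_u - x_v) + (1-α)·y_w·(y_u - y_v) > 0, then αλ₁(T') + (1-α)λ₂(T') > αλ₁(T) + (1-α)λ₂(T). -/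
open scoped Classical

open Polynomial Matrix

variable {n : ℕ}

lemma charpoly_conj_units (P B Q : Matrix (Fin n) (Fin n) ℝ)
    (hPQ : P * Q = 1) :
    (P * B * Q).charpoly = B.charpoly := by
  have hsc : ∀ M : Matrix (Fin n) (Fin n) ℝ[X],
      Commute (scalar (Fin n) X) M := fun M => scalar_commute X (fun r' => Commute.all X r') M
  have hcm : charmatrix (P * B * Q) = (C.mapMatrix P) * charmatrix B * (C.mapMatrix Q) := by
    unfold charmatrix
    rw [mul_sub, sub_mul]
    congr 1
    · rw [mul_assoc, (hsc (C.mapMatrix Q)).eq, ← mul_assoc, ← _root_.map_mul, hPQ, _root_.map_one, one_mul]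
    · rw [_root_.map_mul, _root_.map_mul, mul_assoc]
  have hdet : (C.mapMatrix P).det * (C.mapMatrix Q).det = 1 := by
    rw [← det_mul, ← _root_.map_mul, hPQ, _root_.map_one, det_one]
  rw [Matrix.charpoly, hcm, det_mul, det_mul, Matrix.charpoly]
  ring_nf
  rw [mul_comm, ← mul_assoc, mul_comm (C.mapMatrix Q).det, hdet, one_mul]

noncomputable def eigvals {A : Matrix (Fin n) (Fin n) ℝ} (hA : A.IsHermitian) : Fin n → ℝ :=
  hA.eigenvalues

lemma charpoly_herm {A : Matrix (Fin n) (Fin n) ℝ} (hA : A.IsHermitian) :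
    A.charpoly = ∏ i, (X - C (hA.eigenvalues i)) := by
  have hU := hA.spectral_theorem
  have h1 : (hA.eigenvectorUnitary : Matrix (Fin n) (Fin n) ℝ) *
      (star (hA.eigenvectorUnitary : Matrix (Fin n) (Fin n) ℝ)) = 1 :=
    (Matrix.mem_unitaryGroup_iff).mp hA.eigenvectorUnitary.2
  have : A.charpoly = (Matrix.diagonal (RCLike.ofReal ∘ hA.eigenvalues) :
      Matrix (Fin n) (Fin n) ℝ).charpoly := by
    conv_lhs => rw [hU]
    exact charpoly_conj_units _ _ _ h1
  rw [this]
  have hdiag : (Matrix.diagonal (RCLike.ofReal ∘ hA.eigenvalues) :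
      Matrix (Fin n) (Fin n) ℝ) = Matrix.diagonal hA.eigenvalues := by
    ext i j; simp [Matrix.diagonal_apply]
  rw [hdiag]
  have : charmatrix (Matrix.diagonal hA.eigenvalues) =
      Matrix.diagonal (fun i => X - C (hA.eigenvalues i)) := by
    ext i j
    by_cases h : i = j
    · subst h; simp [charmatrix_apply_eq]
    · simp [charmatrix_apply_ne _ _ _ h, Matrix.diagonal_apply_ne _ h]
  rw [Matrix.charpoly, this, Matrix.det_diagonal]

lemma roots_charpoly_herm {A : Matrix (Fin n) (Fin n) ℝ} (hA : A.IsHermitian) :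
    A.charpoly.roots = Finset.univ.val.map hA.eigenvalues := by
  rw [charpoly_herm hA]
  have : (∏ i, (X - C (hA.eigenvalues i))) =
      ((Finset.univ.val.map hA.eigenvalues).map fun a => X - C a).prod := by
    simp [Finset.prod, Multiset.map_map]
    rfl
  rw [this, Polynomial.roots_multiset_prod_X_sub_C]
open List

variable {L : List ℝ} {n : ℕ}

lemma sl_get_mono (hs : L.Pairwise (· ≤ ·)) {i j : ℕ} (hij : i ≤ j) (hj : j < L.length) :
    L[i]'(lt_of_le_of_lt hij hj) ≤ L[j] := by
  rcases eq_or_lt_of_le hij with h | h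
  · subst h; rfl
  · exact List.pairwise_iff_getElem.mp hs i j _ hj h

lemma sl_mem_le_last (hs : L.Pairwise (· ≤ ·)) (hL : L.length = n) (hn : 1 ≤ n)
    {a : ℝ} (ha : a ∈ L) : a ≤ L.getD (n-1) 0 := by
  obtain ⟨i, hi, rfl⟩ := List.mem_iff_getElem.mp ha
  rw [List.getD_eq_getElem L 0 (by omega)]
  exact sl_get_mono hs (by omega) (by omega)

lemma sl_snd_le_last (hs : L.Pairwise (· ≤ ·)) (hL : L.length = n) (hn : 2 ≤ n) :
    L.getD (n-2) 0 ≤ L.getD (n-1) 0 := by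
  rw [List.getD_eq_getElem L 0 (by omega), List.getD_eq_getElem L 0 (by omega)]
  exact sl_get_mono hs (by omega) (by omega)

lemma sl_mem_dropLast_le (hs : L.Pairwise (· ≤ ·)) (hL : L.length = n) (hn : 2 ≤ n)
    {a : ℝ} (ha : a ∈ L.dropLast) : a ≤ L.getD (n-2) 0 := by
  obtain ⟨i, hi, rfl⟩ := List.mem_iff_getElem.mp ha
  rw [List.length_dropLast] at hi
  rw [List.getD_eq_getElem L 0 (by omega), List.getElem_dropLast]
  exact sl_get_mono hs (by omega) (by omega)

lemma sl_pair (hs : L.Pairwise (· ≤ ·)) (hL : L.length = n) (hn : 2 ≤ n)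
    {a b : ℝ} (hab : (a ::ₘ {b} : Multiset ℝ) ≤ (L : Multiset ℝ)) :
    a ≤ L.getD (n-2) 0 ∨ b ≤ L.getD (n-2) 0 := by
  by_contra hcon
  push_neg at hcon
  obtain ⟨ha2, hb2⟩ := hcon
  have hmemL : ∀ c ∈ ({a, b} : Multiset ℝ), c ∈ L := fun c hc =>
    Multiset.mem_coe.mp (Multiset.subset_of_le hab hc)
  have hne : L ≠ [] := by intro h; rw [h] at hL; simp at hL; omega
  have hlast : L.getD (n-1) 0 = L.getLast hne := by
    rw [List.getLast_eq_getElem, List.getD_eq_getElem L 0 (by omega)]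
    exact le_antisymm (sl_get_mono hs (by omega) (by omega)) (sl_get_mono hs (by omega) (by omega))
  have hLsplit : L = L.dropLast ++ [L.getD (n-1) 0] := by
    rw [hlast]
    exact (List.dropLast_append_getLast hne).symm
  have hnotdrop : ∀ c : ℝ, L.getD (n-2) 0 < c → c ∉ L.dropLast := fun c hc hmem =>
    absurd (sl_mem_dropLast_le hs hL hn hmem) (not_le.mpr hc)
  -- positions: a and b both must equal the last element, and count of that value ≥ 2
  have hcount : ∀ c : ℝ, L.getD (n-2) 0 < c → L.count c ≤ 1 := by
    intro c hc
    conv_lhs => rw [hLsplit]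
    rw [List.count_append]
    have : L.dropLast.count c = 0 := List.count_eq_zero.mpr (hnotdrop c hc)
    rw [this]
    simp [List.count_singleton]
    split <;> omega
  have hab' : a = b := by
    have ha : a ∈ L := hmemL a (by simp)
    have hb : b ∈ L := hmemL b (by simp)
    obtain ⟨i, hi, hia⟩ := List.mem_iff_getElem.mp ha
    obtain ⟨j, hj, hjb⟩ := List.mem_iff_getElem.mp hb
    have hi' : i = n - 1 := by
      by_contra h
      have : L[i] ≤ L.getD (n-2) 0 := by
        rw [List.getD_eq_getElem L 0 (by omega)]
        exact sl_get_mono hs (by omega) (by omega)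
      rw [hia] at this; exact absurd this (not_le.mpr ha2)
    have hj' : j = n - 1 := by
      by_contra h
      have : L[j] ≤ L.getD (n-2) 0 := by
        rw [List.getD_eq_getElem L 0 (by omega)]
        exact sl_get_mono hs (by omega) (by omega)
      rw [hjb] at this; exact absurd this (not_le.mpr hb2)
    subst hi' hj'
    rw [← hia, ← hjb]
  subst hab'
  have h2 : 2 ≤ L.count a := by
    have := Multiset.count_le_of_le a hab
    simpa [Multiset.coe_count] using this
  exact absurd h2 (by have := hcount a ha2; omega)

lemma sl_last_pair_le (hs : L.Pairwise (· ≤ ·)) (hL : L.length = n) (hn : 2 ≤ n) :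
    ((L.getD (n-2) 0) ::ₘ {L.getD (n-1) 0} : Multiset ℝ) ≤ (L : Multiset ℝ) := by
  have hdrop : L.drop (n-2) = [L.getD (n-2) 0, L.getD (n-1) 0] := by
    rw [List.getD_eq_getElem L 0 (by omega), List.getD_eq_getElem L 0 (by omega)]
    rw [List.drop_eq_getElem_cons (by omega), List.drop_eq_getElem_cons (by omega),
      List.drop_eq_nil_of_le (by omega)]
    have h12 : L[n-2+1]'(by omega) = L[n-1]'(by omega) :=
      le_antisymm (sl_get_mono hs (by omega) (by omega)) (sl_get_mono hs (by omega) (by omega))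
    rw [h12]
  have : (L.drop (n-2) : Multiset ℝ) ≤ (L : Multiset ℝ) :=
    Multiset.coe_le.mpr (List.drop_sublist _ _).subperm
  rw [hdrop] at this
  exact le_trans (le_of_eq (by rfl)) this
section GraphEig
open Matrix
variable {n : ℕ} (G : SimpleGraph (Fin n))

lemma adjMat_isHermitian : (adjMat G).IsHermitian := by
  ext i j
  simp [adjMat, Matrix.conjTranspose_apply, SimpleGraph.adj_comm]

lemma eigList_coe : ((eigList G : List ℝ) : Multiset ℝ) =
    Finset.univ.val.map (adjMat_isHermitian G).eigenvalues := by
  rw [eigList, Multiset.sort_eq, roots_charpoly_herm]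

lemma eigList_sorted : (eigList G).Pairwise (· ≤ ·) := Multiset.pairwise_sort _ _

lemma eigList_length : (eigList G).length = n := by
  have := congrArg Multiset.card (eigList_coe G)
  simpa using this

lemma eig_le_lam1 (hn : 1 ≤ n) (i : Fin n) :
    (adjMat_isHermitian G).eigenvalues i ≤ lam 1 G := by
  apply sl_mem_le_last (eigList_sorted G) (eigList_length G) hn
  rw [← Multiset.mem_coe, eigList_coe G]
  exact Multiset.mem_map.mpr ⟨i, Finset.mem_univ i, rfl⟩

lemma lam2_le_lam1 (hn : 2 ≤ n) : lam 2 G ≤ lam 1 G :=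
  sl_snd_le_last (eigList_sorted G) (eigList_length G) hn

lemma exists_eig_lam1 (hn : 1 ≤ n) :
    ∃ i : Fin n, (adjMat_isHermitian G).eigenvalues i = lam 1 G := by
  have hmem : lam 1 G ∈ eigList G := by
    rw [lam, List.getD_eq_getElem _ 0 (by rw [eigList_length]; omega)]
    exact List.getElem_mem _
  rw [← Multiset.mem_coe, eigList_coe G, Multiset.mem_map] at hmem
  obtain ⟨i, _, hi⟩ := hmem
  exact ⟨i, hi⟩

lemma pair_le_univ {i j : Fin n} (hij : i ≠ j) :
    (i ::ₘ {j} : Multiset (Fin n)) ≤ Finset.univ.val := by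
  rw [Multiset.le_iff_count]
  intro a
  have hcu : Multiset.count a Finset.univ.val = 1 :=
    Multiset.count_eq_one_of_mem Finset.univ.nodup (Finset.mem_univ a)
  rw [hcu, Multiset.count_cons, Multiset.count_singleton]
  rcases eq_or_ne a i with rfl | h1 <;> rcases eq_or_ne a j with rfl | h2 <;>
    simp_all <;> omega

lemma eig_le_lam2 (hn : 2 ≤ n) :
    ∃ i₀ : Fin n, (adjMat_isHermitian G).eigenvalues i₀ = lam 1 G ∧
      ∀ i ≠ i₀, (adjMat_isHermitian G).eigenvalues i ≤ lam 2 G := by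
  obtain ⟨i₀, hi₀⟩ := exists_eig_lam1 G (by omega)
  refine ⟨i₀, hi₀, fun i hi => ?_⟩
  set e := (adjMat_isHermitian G).eigenvalues
  have hpair : (e i ::ₘ {e i₀} : Multiset ℝ) ≤ ((eigList G : List ℝ) : Multiset ℝ) := by
    rw [eigList_coe G]
    have heq : (e i ::ₘ {e i₀} : Multiset ℝ) = (i ::ₘ {i₀} : Multiset (Fin n)).map e := by
      simp
    rw [heq]
    exact Multiset.map_le_map (pair_le_univ hi)
  have := sl_pair (eigList_sorted G) (eigList_length G) hn hpair
  rcases this with h | h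
  · exact h
  · calc e i ≤ lam 1 G := eig_le_lam1 G (by omega) i
      _ = e i₀ := hi₀.symm
      _ ≤ lam 2 G := h

lemma lam1_eq_lam2_two_eigs (hn : 2 ≤ n) (h12 : lam 1 G = lam 2 G) :
    ∃ i j : Fin n, i ≠ j ∧ (adjMat_isHermitian G).eigenvalues i = lam 1 G ∧
      (adjMat_isHermitian G).eigenvalues j = lam 1 G := by
  set e := (adjMat_isHermitian G).eigenvalues with he
  have hpair := sl_last_pair_le (eigList_sorted G) (eigList_length G) hn
  have hl2 : (eigList G).getD (n-2) 0 = lam 2 G := rfl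
  have hl1 : (eigList G).getD (n-1) 0 = lam 1 G := rfl
  rw [hl2, hl1, ← h12, eigList_coe G] at hpair
  have hcnt : 2 ≤ Multiset.count (lam 1 G) (Finset.univ.val.map e) := by
    have := Multiset.count_le_of_le (lam 1 G) hpair
    simpa using this
  rw [Multiset.count_map] at hcnt
  have hcard : 1 < (Finset.univ.filter (fun i => lam 1 G = e i)).card := by
    rw [Finset.card_def, Finset.filter_val]; omega
  obtain ⟨i, hi, j, hj, hij⟩ := Finset.one_lt_card.mp hcard
  rw [Finset.mem_filter] at hi hj
  exact ⟨i, j, hij, (hi.2).symm, (hj.2).symm⟩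

end GraphEig
section Spectral
open Matrix
variable {n : ℕ} {A : Matrix (Fin n) (Fin n) ℝ} (hA : A.IsHermitian)

lemma star_eq_transpose' (M : Matrix (Fin n) (Fin n) ℝ) : star M = Mᵀ := by
  ext i j; simp [Matrix.star_apply]

noncomputable def Umat : Matrix (Fin n) (Fin n) ℝ := hA.eigenvectorUnitary

lemma U_mul_Ut : Umat hA * (Umat hA)ᵀ = 1 := by
  have := (Matrix.mem_unitaryGroup_iff).mp hA.eigenvectorUnitary.2
  rwa [star_eq_transpose'] at this

lemma Ut_mul_U : (Umat hA)ᵀ * Umat hA = 1 := by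
  have := (Matrix.mem_unitaryGroup_iff').mp hA.eigenvectorUnitary.2
  rwa [star_eq_transpose'] at this

lemma spec_decomp : A = Umat hA * Matrix.diagonal hA.eigenvalues * (Umat hA)ᵀ := by
  have := hA.spectral_theorem
  rw [Unitary.conjStarAlgAut_apply, star_eq_transpose'] at this
  refine this.trans ?_
  rfl

lemma coords_dot (z z' : Fin n → ℝ) :
    ((Umat hA)ᵀ *ᵥ z) ⬝ᵥ ((Umat hA)ᵀ *ᵥ z') = z ⬝ᵥ z' := by
  rw [Matrix.mulVec_transpose, ← Matrix.dotProduct_mulVec, Matrix.mulVec_mulVec, U_mul_Ut,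
    Matrix.one_mulVec]

lemma quad_eq (z : Fin n → ℝ) :
    z ⬝ᵥ (A *ᵥ z) = ∑ i, hA.eigenvalues i * ((Umat hA)ᵀ *ᵥ z) i ^ 2 := by
  conv_lhs => rw [spec_decomp hA]
  rw [← Matrix.mulVec_mulVec, ← Matrix.mulVec_mulVec, Matrix.dotProduct_mulVec,
    ← Matrix.mulVec_transpose]
  simp only [dotProduct, Matrix.mulVec_diagonal]
  exact Finset.sum_congr rfl (fun i _ => by ring)

lemma coords_recover (z : Fin n → ℝ) : Umat hA *ᵥ ((Umat hA)ᵀ *ᵥ z) = z := by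
  rw [Matrix.mulVec_mulVec, U_mul_Ut, Matrix.one_mulVec]

lemma mulVec_coords (z : Fin n → ℝ) :
    A *ᵥ z = Umat hA *ᵥ (Matrix.diagonal hA.eigenvalues *ᵥ ((Umat hA)ᵀ *ᵥ z)) := by
  conv_lhs => rw [spec_decomp hA]
  rw [Matrix.mulVec_mulVec, Matrix.mulVec_mulVec]

end Spectral

section Analytic
open Matrix
variable {n : ℕ} (G : SimpleGraph (Fin n))

lemma quad_le_lam1 (hn : 1 ≤ n) (z : Fin n → ℝ) :
    z ⬝ᵥ (adjMat G *ᵥ z) ≤ lam 1 G * (z ⬝ᵥ z) := by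
  set hA := adjMat_isHermitian G
  rw [quad_eq hA, ← coords_dot hA z z]
  simp only [dotProduct]
  rw [Finset.mul_sum]
  apply Finset.sum_le_sum
  intro i _
  have h1 : ((Umat hA)ᵀ *ᵥ z) i * ((Umat hA)ᵀ *ᵥ z) i = ((Umat hA)ᵀ *ᵥ z) i ^ 2 := by ring
  rw [h1]
  exact mul_le_mul_of_nonneg_right (eig_le_lam1 G hn i) (sq_nonneg _)

lemma quad_eq_imp_eigen (hn : 1 ≤ n) (z : Fin n → ℝ)
    (h : z ⬝ᵥ (adjMat G *ᵥ z) = lam 1 G * (z ⬝ᵥ z)) :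
    adjMat G *ᵥ z = lam 1 G • z := by
  set hA := adjMat_isHermitian G
  set a := (Umat hA)ᵀ *ᵥ z with ha
  have hsum : ∑ i, (lam 1 G - hA.eigenvalues i) * a i ^ 2 = 0 := by
    have h1 := quad_eq hA z
    rw [← ha] at h1
    have h3 : ∑ i, a i * a i = ∑ i, a i ^ 2 := Finset.sum_congr rfl (fun i _ => by ring)
    have hzz : ∑ i, a i ^ 2 = z ⬝ᵥ z := by
      rw [← h3]; exact coords_dot hA z z
    calc ∑ i, (lam 1 G - hA.eigenvalues i) * a i ^ 2
        = lam 1 G * ∑ i, a i ^ 2 - ∑ i, hA.eigenvalues i * a i ^ 2 := by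
          rw [Finset.mul_sum, ← Finset.sum_sub_distrib]
          exact Finset.sum_congr rfl (fun i _ => by ring)
      _ = 0 := by rw [hzz, ← h1, h]; ring
  have hterm : ∀ i ∈ Finset.univ, (lam 1 G - hA.eigenvalues i) * a i ^ 2 = 0 := by
    rw [← Finset.sum_eq_zero_iff_of_nonneg]
    · exact hsum
    · intro i _
      exact mul_nonneg (by linarith [eig_le_lam1 G hn i]) (sq_nonneg _)
  have hDa : Matrix.diagonal hA.eigenvalues *ᵥ a = lam 1 G • a := by
    funext i
    simp only [Matrix.mulVec_diagonal, Pi.smul_apply, smul_eq_mul]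
    have := hterm i (Finset.mem_univ i)
    rcases mul_eq_zero.mp this with h0 | h0
    · have : hA.eigenvalues i = lam 1 G := by linarith
      rw [this]
    · have : a i = 0 := by
        have := sq_eq_zero_iff.mp h0
        exact this
      rw [this]; ring
  rw [mulVec_coords hA z, hDa, Matrix.mulVec_smul, coords_recover hA z]

lemma kyfan (hn : 2 ≤ n) (α : ℝ) (hα : 1 / 2 ≤ α) (hα1 : α ≤ 1)
    (z₁ z₂ : Fin n → ℝ) (h1 : z₁ ⬝ᵥ z₁ = 1) (h2 : z₂ ⬝ᵥ z₂ = 1) (h12 : z₁ ⬝ᵥ z₂ = 0) :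
    α * (z₁ ⬝ᵥ (adjMat G *ᵥ z₁)) + (1 - α) * (z₂ ⬝ᵥ (adjMat G *ᵥ z₂)) ≤
      α * lam 1 G + (1 - α) * lam 2 G := by
  set hA := adjMat_isHermitian G
  set a := (Umat hA)ᵀ *ᵥ z₁ with ha
  set b := (Umat hA)ᵀ *ᵥ z₂ with hb
  have haa : ∑ i, a i * a i = 1 := by
    have := coords_dot hA z₁ z₁; rw [h1] at this
    simpa [dotProduct] using this
  have hbb : ∑ i, b i * b i = 1 := by
    have := coords_dot hA z₂ z₂; rw [h2] at this
    simpa [dotProduct] using this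
  have hab : ∑ i, a i * b i = 0 := by
    have := coords_dot hA z₁ z₂; rw [h12] at this
    simpa [dotProduct] using this
  obtain ⟨i₀, hi₀, hle2⟩ := eig_le_lam2 G hn
  set w : Fin n → ℝ := fun i => α * a i ^ 2 + (1 - α) * b i ^ 2 with hw
  have hwnn : ∀ i, 0 ≤ w i := fun i =>
    add_nonneg (mul_nonneg (by linarith) (sq_nonneg _)) (mul_nonneg (by linarith) (sq_nonneg _))
  have hwsum : ∑ i, w i = 1 := by
    simp only [hw]
    rw [Finset.sum_add_distrib, ← Finset.mul_sum, ← Finset.mul_sum]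
    have ha2 : ∑ i, a i ^ 2 = 1 := by rw [← haa]; exact Finset.sum_congr rfl fun i _ => by ring
    have hb2 : ∑ i, b i ^ 2 = 1 := by rw [← hbb]; exact Finset.sum_congr rfl fun i _ => by ring
    rw [ha2, hb2]; ring
  -- Bessel : w i₀ ≤ α
  have hbessel : a i₀ ^ 2 + b i₀ ^ 2 ≤ 1 := by
    have hkey : 0 ≤ ∑ i, ((if i = i₀ then 1 else 0) - a i₀ * a i - b i₀ * b i) ^ 2 :=
      Finset.sum_nonneg fun i _ => sq_nonneg _
    have hexp : ∑ i, ((if i = i₀ then 1 else 0) - a i₀ * a i - b i₀ * b i) ^ 2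
        = 1 - a i₀ ^ 2 - b i₀ ^ 2 := by
      have : ∀ i, ((if i = i₀ then 1 else 0) - a i₀ * a i - b i₀ * b i) ^ 2 =
          (if i = i₀ then (1:ℝ) else 0) - 2 * (if i = i₀ then 1 else 0) * (a i₀ * a i + b i₀ * b i)
          + (a i₀ ^2 * (a i * a i) + b i₀ ^2 * (b i * b i) + 2 * a i₀ * b i₀ * (a i * b i)) := by
        intro i
        by_cases h : i = i₀ <;> simp [h] <;> ring
      rw [Finset.sum_congr rfl fun i _ => this i]
      rw [Finset.sum_add_distrib, Finset.sum_sub_distrib]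
      simp only [Finset.sum_ite_eq', Finset.mem_univ, if_true]
      rw [Finset.sum_add_distrib, Finset.sum_add_distrib, ← Finset.mul_sum, ← Finset.mul_sum,
        ← Finset.mul_sum, haa, hbb, hab]
      have : ∑ i, 2 * (if i = i₀ then (1:ℝ) else 0) * (a i₀ * a i + b i₀ * b i) =
          2 * (a i₀ * a i₀ + b i₀ * b i₀) := by
        rw [Finset.sum_congr rfl (fun i _ => by
          rw [show 2 * (if i = i₀ then (1:ℝ) else 0) * (a i₀ * a i + b i₀ * b i) =
            (if i = i₀ then 2 * (a i₀ * a i + b i₀ * b i) else 0) from by split <;> ring])]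
        simp
      rw [this]; ring
    rw [hexp] at hkey; linarith
  have hwi₀ : w i₀ ≤ α := by
    have : w i₀ ≤ α * (a i₀ ^ 2 + b i₀ ^ 2) := by
      simp only [hw]; nlinarith [sq_nonneg (b i₀)]
    calc w i₀ ≤ α * (a i₀ ^ 2 + b i₀ ^ 2) := this
      _ ≤ α * 1 := mul_le_mul_of_nonneg_left hbessel (by linarith)
      _ = α := mul_one α
  -- main computation
  have hquad : α * (z₁ ⬝ᵥ (adjMat G *ᵥ z₁)) + (1 - α) * (z₂ ⬝ᵥ (adjMat G *ᵥ z₂)) =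
      ∑ i, w i * hA.eigenvalues i := by
    rw [quad_eq hA z₁, quad_eq hA z₂, Finset.mul_sum, Finset.mul_sum, ← Finset.sum_add_distrib]
    exact Finset.sum_congr rfl fun i _ => by simp only [hw]; ring
  rw [hquad]
  have hsplit : ∑ i, w i * hA.eigenvalues i =
      w i₀ * hA.eigenvalues i₀ + ∑ i ∈ Finset.univ.erase i₀, w i * hA.eigenvalues i := by
    rw [← Finset.add_sum_erase _ _ (Finset.mem_univ i₀)]
  rw [hsplit]
  have hrest : ∑ i ∈ Finset.univ.erase i₀, w i * hA.eigenvalues i ≤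
      (1 - w i₀) * lam 2 G := by
    have hsum' : ∑ i ∈ Finset.univ.erase i₀, w i = 1 - w i₀ := by
      have := Finset.add_sum_erase Finset.univ w (Finset.mem_univ i₀)
      rw [hwsum] at this; linarith
    rw [← hsum', Finset.sum_mul]
    apply Finset.sum_le_sum
    intro i hi
    exact mul_le_mul_of_nonneg_left (hle2 i (Finset.ne_of_mem_erase hi)) (hwnn i)
  have hlam12 : lam 2 G ≤ lam 1 G := lam2_le_lam1 G hn
  have hw1 : w i₀ ≤ 1 := by
    calc w i₀ ≤ α := hwi₀
      _ ≤ 1 := hα1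
  calc w i₀ * hA.eigenvalues i₀ + ∑ i ∈ Finset.univ.erase i₀, w i * hA.eigenvalues i
      ≤ w i₀ * lam 1 G + (1 - w i₀) * lam 2 G := by
        rw [hi₀]; linarith [hrest]
    _ ≤ α * lam 1 G + (1 - α) * lam 2 G := by nlinarith [hwi₀, hwnn i₀]
  done

end Analytic
section Perron
open Matrix
variable {n : ℕ}

lemma transpose_eq_self {A : Matrix (Fin n) (Fin n) ℝ} (hA : A.IsHermitian) : Aᵀ = A := by
  ext i j
  have h := congr_fun (congr_fun hA i) j
  simpa [Matrix.conjTranspose_apply] using h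

lemma sym_dot {A : Matrix (Fin n) (Fin n) ℝ} (hA : A.IsHermitian) (x y : Fin n → ℝ) :
    (A *ᵥ x) ⬝ᵥ y = x ⬝ᵥ (A *ᵥ y) := by
  conv_lhs => rw [← transpose_eq_self hA, Matrix.mulVec_transpose]
  rw [← Matrix.dotProduct_mulVec]

lemma basis_dot (G : SimpleGraph (Fin n)) (i j : Fin n) :
    ⇑((adjMat_isHermitian G).eigenvectorBasis i) ⬝ᵥ ⇑((adjMat_isHermitian G).eigenvectorBasis j)
      = if i = j then 1 else 0 := by
  have := orthonormal_iff_ite.mp (adjMat_isHermitian G).eigenvectorBasis.orthonormal i j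
  rw [← this]
  simp [PiLp.inner_apply, RCLike.inner_apply, dotProduct, mul_comm]

lemma exists_cross {V : Type*} {G : SimpleGraph V} {S : Set V} :
    ∀ {a b : V}, G.Walk a b → a ∈ S → b ∉ S → ∃ c d, G.Adj c d ∧ c ∈ S ∧ d ∉ S := by
  intro a b wk
  induction wk with
  | nil => intro ha hb; exact absurd ha hb
  | @cons a' c' b' h p ih =>
    intro ha hb
    by_cases hc : c' ∈ S
    · exact ih hc hb
    · exact ⟨a', c', h, ha, hc⟩

lemma pos_dot {x v : Fin n → ℝ} (hx : ∀ i, 0 < x i) (hv : ∀ i, 0 ≤ v i) (hne : v ≠ 0) :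
    0 < x ⬝ᵥ v := by
  obtain ⟨k, hk⟩ : ∃ k, v k ≠ 0 := by
    by_contra h; push_neg at h; exact hne (funext h)
  have hk' : 0 < v k := lt_of_le_of_ne (hv k) (Ne.symm hk)
  rw [dotProduct]
  apply Finset.sum_pos' (fun i _ => mul_nonneg (hx i).le (hv i))
  exact ⟨k, Finset.mem_univ k, mul_pos (hx k) hk'⟩

lemma perron_gap (T : SimpleGraph (Fin n)) (hT : T.IsTree) (hn : 2 ≤ n)
    (x : Fin n → ℝ) (hx : adjMat T *ᵥ x = lam 1 T • x)
    (hxunit : ∑ i, x i ^ 2 = 1) (hxpos : ∀ i, 0 < x i) :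
    lam 2 T < lam 1 T := by
  rcases lt_or_eq_of_le (lam2_le_lam1 T hn) with h | h12
  · exact h
  exfalso
  set hA := adjMat_isHermitian T with hAdef
  -- two eigenvectors for lam 1
  obtain ⟨i, j, hij, hei, hej⟩ := lam1_eq_lam2_two_eigs T hn h12.symm
  set bi := ⇑(hA.eigenvectorBasis i) with hbi
  set bj := ⇑(hA.eigenvectorBasis j) with hbj
  have hbii : bi ⬝ᵥ bi = 1 := by have := basis_dot T i i; simpa using this
  have hbjj : bj ⬝ᵥ bj = 1 := by have := basis_dot T j j; simpa using this
  have hbij : bi ⬝ᵥ bj = 0 := by have := basis_dot T i j; simpa [hij] using this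
  have hAbi : adjMat T *ᵥ bi = lam 1 T • bi := by
    rw [hbi, hA.mulVec_eigenvectorBasis, hei]
  have hAbj : adjMat T *ᵥ bj = lam 1 T • bj := by
    rw [hbj, hA.mulVec_eigenvectorBasis, hej]
  -- construct z ⊥ x, eigenvector, nonzero
  obtain ⟨z, hznz, hxz, hAz⟩ : ∃ z : Fin n → ℝ, z ≠ 0 ∧ x ⬝ᵥ z = 0 ∧
      adjMat T *ᵥ z = lam 1 T • z := by
    set c := x ⬝ᵥ bj with hc
    set d := x ⬝ᵥ bi with hd
    by_cases hcd : c = 0 ∧ d = 0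
    · refine ⟨bi, ?_, by rw [← hd, hcd.2], hAbi⟩
      intro h0; rw [h0] at hbii; simp at hbii
    · refine ⟨c • bi - d • bj, ?_, ?_, ?_⟩
      · intro h0
        have hzz : (c • bi - d • bj) ⬝ᵥ (c • bi - d • bj) = c ^ 2 + d ^ 2 := by
          simp only [sub_dotProduct, dotProduct_sub, smul_dotProduct,
            dotProduct_smul, smul_eq_mul]
          rw [hbii, hbjj, hbij, dotProduct_comm bj bi, hbij]
          ring
        rw [h0] at hzz
        simp only [zero_dotProduct] at hzz
        have hc0 : c = 0 := by nlinarith [sq_nonneg c, sq_nonneg d]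
        have hd0 : d = 0 := by nlinarith [sq_nonneg c, sq_nonneg d]
        exact hcd ⟨hc0, hd0⟩
      · simp only [dotProduct_sub, dotProduct_smul, smul_eq_mul, ← hc, ← hd]
        ring
      · rw [Matrix.mulVec_sub, Matrix.mulVec_smul, Matrix.mulVec_smul, hAbi, hAbj,
          smul_sub, smul_comm (lam 1 T) c, smul_comm (lam 1 T) d]
  -- Perron argument
  set w : Fin n → ℝ := fun k => |z k| with hw
  have hquad : z ⬝ᵥ (adjMat T *ᵥ z) = lam 1 T * (z ⬝ᵥ z) := by
    rw [hAz, dotProduct_smul, smul_eq_mul]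
  have hww : w ⬝ᵥ w = z ⬝ᵥ z := by
    simp only [dotProduct, hw]
    exact Finset.sum_congr rfl fun k _ => abs_mul_abs_self (z k)
  have hAnn : ∀ k l, 0 ≤ adjMat T k l := by
    intro k l; simp only [adjMat]; split <;> norm_num
  have hge : z ⬝ᵥ (adjMat T *ᵥ z) ≤ w ⬝ᵥ (adjMat T *ᵥ w) := by
    simp only [dotProduct, Matrix.mulVec, Finset.mul_sum]
    apply Finset.sum_le_sum; intro k _
    apply Finset.sum_le_sum; intro l _
    have h1 : z k * (adjMat T k l * z l) = adjMat T k l * (z k * z l) := by ring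
    have h2 : w k * (adjMat T k l * w l) = adjMat T k l * |z k * z l| := by
      rw [hw]; dsimp only; rw [abs_mul]; ring
    rw [h1, h2]
    exact mul_le_mul_of_nonneg_left (le_abs_self _) (hAnn k l)
  have hwe : adjMat T *ᵥ w = lam 1 T • w := by
    apply quad_eq_imp_eigen T (by omega) w
    have hle := quad_le_lam1 T (by omega) w
    have : lam 1 T * (w ⬝ᵥ w) ≤ w ⬝ᵥ (adjMat T *ᵥ w) := by
      rw [hww, ← hquad]; exact hge
    linarith
  set p : Fin n → ℝ := w + z with hp
  have hAp : adjMat T *ᵥ p = lam 1 T • p := by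
    rw [hp, Matrix.mulVec_add, hwe, hAz, smul_add]
  have hpnn : ∀ k, 0 ≤ p k := by
    intro k; simp only [hp, Pi.add_apply, hw]
    have := neg_abs_le (z k); linarith [abs_nonneg (z k)]
  -- z has a positive and a negative entry
  have hneg : ∃ k, z k < 0 := by
    by_contra hcon; push_neg at hcon
    have := pos_dot hxpos hcon hznz
    rw [hxz] at this; exact lt_irrefl 0 this
  have hpos : ∃ k, 0 < z k := by
    by_contra hcon; push_neg at hcon
    have hzneg : ∀ k, 0 ≤ (-z) k := fun k => by simp [hcon k]
    have hne : (-z : Fin n → ℝ) ≠ 0 := fun h0 => hznz (by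
      funext k; have := congrFun h0 k; simp at this; simpa using this)
    have := pos_dot hxpos hzneg hne
    rw [dotProduct_neg, hxz] at this; simp at this
  obtain ⟨k₀, hk₀⟩ := hpos
  obtain ⟨k₁, hk₁⟩ := hneg
  have hpk₀ : 0 < p k₀ := by
    simp only [hp, Pi.add_apply, hw]; rw [abs_of_pos hk₀]; linarith
  have hpk₁ : p k₁ = 0 := by
    simp only [hp, Pi.add_apply, hw]; rw [abs_of_neg hk₁]; ring
  set S : Set (Fin n) := {k | 0 < p k} with hS
  have hwalk : ∃ c d, T.Adj c d ∧ c ∈ S ∧ d ∉ S := by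
    obtain ⟨wk⟩ := hT.isConnected.preconnected k₀ k₁
    exact exists_cross wk hpk₀ (by simp only [hS, Set.mem_setOf_eq, hpk₁]; exact lt_irrefl 0)
  obtain ⟨c, d, hcd, hcS, hdS⟩ := hwalk
  have hpd : p d = 0 := by
    rcases lt_or_eq_of_le (hpnn d) with h | h
    · exact absurd h hdS
    · exact h.symm
  have h1 : (adjMat T *ᵥ p) d = 0 := by
    rw [hAp]; simp [hpd]
  have h2 : 0 < (adjMat T *ᵥ p) d := by
    have hdef : (adjMat T *ᵥ p) d = ∑ l, adjMat T d l * p l := rfl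
    rw [hdef]
    apply Finset.sum_pos' (fun l _ => mul_nonneg (hAnn d l) (hpnn l))
    refine ⟨c, Finset.mem_univ c, ?_⟩
    have : adjMat T d c = 1 := by rw [adjMat]; simp [hcd.symm]
    rw [this, one_mul]; exact hcS
  rw [h1] at h2; exact lt_irrefl 0 h2

end Perron
section Surgery
open Matrix
variable {n : ℕ}

lemma tree_no_triangle {T : SimpleGraph (Fin n)} (hT : T.IsTree) {u v w : Fin n}
    (huv : T.Adj u v) (hvw : T.Adj v w) (huw : u ≠ w) : ¬ T.Adj u w := by
  intro h
  have hp2 : (SimpleGraph.Walk.cons huv (SimpleGraph.Walk.cons hvw SimpleGraph.Walk.nil)).IsPath := by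
    simp [SimpleGraph.Walk.isPath_def, huv.ne, huw, hvw.ne]
  have := hT.IsAcyclic.path_unique (SimpleGraph.Path.singleton h)
    ⟨SimpleGraph.Walk.cons huv (SimpleGraph.Walk.cons hvw SimpleGraph.Walk.nil), hp2⟩
  have hlen := congrArg (fun p : T.Path u w => p.val.length) this
  simp [SimpleGraph.Path.singleton] at hlen

noncomputable def pairMat (a b : Fin n) : Matrix (Fin n) (Fin n) ℝ :=
  fun i j => (if i = a ∧ j = b then 1 else 0) + (if i = b ∧ j = a then 1 else 0)

lemma mulVec_pairMat (a b : Fin n) (z : Fin n → ℝ) :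
    pairMat a b *ᵥ z = fun i => (if i = a then z b else 0) + (if i = b then z a else 0) := by
  funext i
  show ∑ j, pairMat a b i j * z j = _
  simp only [pairMat, add_mul, Finset.sum_add_distrib]
  congr 1
  · rw [Finset.sum_congr rfl (fun j _ => show (if i = a ∧ j = b then (1:ℝ) else 0) * z j
      = if j = b then (if i = a then z b else 0) else 0 from by
        by_cases h1 : i = a <;> by_cases h2 : j = b <;> simp [h1, h2])]
    simp
  · rw [Finset.sum_congr rfl (fun j _ => show (if i = b ∧ j = a then (1:ℝ) else 0) * z j
      = if j = a then (if i = b then z a else 0) else 0 from by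
        by_cases h1 : i = b <;> by_cases h2 : j = a <;> simp [h1, h2])]
    simp

lemma dot_pairMat (a b : Fin n) (hab : a ≠ b) (z : Fin n → ℝ) :
    z ⬝ᵥ (pairMat a b *ᵥ z) = 2 * z a * z b := by
  rw [mulVec_pairMat]
  show ∑ i, z i * _ = _
  simp only [mul_add, Finset.sum_add_distrib, mul_ite, mul_zero]
  rw [Finset.sum_ite_eq' Finset.univ a (fun i => z i * z b),
    Finset.sum_ite_eq' Finset.univ b (fun i => z i * z a)]
  simp only [Finset.mem_univ, if_true]
  ring

lemma adjMat_rotate {T : SimpleGraph (Fin n)} {u v w : Fin n}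
    (huv : u ≠ v) (hvw : v ≠ w) (huw : u ≠ w)
    (hTvw : T.Adj v w) (hTuw : ¬ T.Adj u w) :
    adjMat (SimpleGraph.fromEdgeSet ((T.edgeSet \ {s(v, w)}) ∪ {s(u, w)})) =
      adjMat T - pairMat v w + pairMat u w := by
  have hTwu : ¬ T.Adj w u := fun h => hTuw h.symm
  ext i j
  simp only [adjMat, Matrix.add_apply, Matrix.sub_apply, pairMat,
    SimpleGraph.fromEdgeSet_adj, Set.mem_union, Set.mem_diff, Set.mem_singleton_iff,
    SimpleGraph.mem_edgeSet, Sym2.eq_iff]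
  by_cases hA : (i = v ∧ j = w) ∨ (i = w ∧ j = v)
  · rcases hA with ⟨rfl, rfl⟩ | ⟨rfl, rfl⟩
    · simp [hTvw, hvw, Ne.symm huv, huw, Ne.symm huw]
    · simp [hTvw.symm, Ne.symm hvw, Ne.symm huw, huv, Ne.symm huv, hvw]
  · push_neg at hA
    by_cases hB : (i = u ∧ j = w) ∨ (i = w ∧ j = u)
    · rcases hB with ⟨rfl, rfl⟩ | ⟨rfl, rfl⟩
      · simp [hTuw, huw, huv, hvw, Ne.symm hvw]
      · simp [hTwu, Ne.symm huw, Ne.symm hvw, huv, Ne.symm huv, hvw, huw]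
    · push_neg at hB
      have h1 := hA.1; have h2 := hA.2; have h3 := hB.1; have h4 := hB.2
      by_cases hadj : T.Adj i j
      · have hne : i ≠ j := hadj.ne
        simp only [hadj, hne, ne_eq, not_false_iff, true_and, if_true]
        have hc1 : ¬(i = v ∧ j = w ∨ i = w ∧ j = v) := by tauto
        have hc2 : ¬(i = u ∧ j = w ∨ i = w ∧ j = u) := by tauto
        simp only [hc1, not_false_iff]
        have e1 : (if i = v ∧ j = w then (1:ℝ) else 0) = 0 := by
          rw [if_neg]; tauto
        have e2 : (if i = w ∧ j = v then (1:ℝ) else 0) = 0 := by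
          rw [if_neg]; tauto
        have e3 : (if i = u ∧ j = w then (1:ℝ) else 0) = 0 := by
          rw [if_neg]; tauto
        have e4 : (if i = w ∧ j = u then (1:ℝ) else 0) = 0 := by
          rw [if_neg]; tauto
        rw [e1, e2, e3, e4]
        have : ((True ∧ True) ∧ ¬i = j) := by exact ⟨⟨trivial, trivial⟩, hne⟩
        simp [hne]
      · have e0 : (if T.Adj i j then (1:ℝ) else 0) = 0 := by rw [if_neg hadj]
        have e1 : (if i = v ∧ j = w then (1:ℝ) else 0) = 0 := by rw [if_neg]; tauto
        have e2 : (if i = w ∧ j = v then (1:ℝ) else 0) = 0 := by rw [if_neg]; tauto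
        have e3 : (if i = u ∧ j = w then (1:ℝ) else 0) = 0 := by rw [if_neg]; tauto
        have e4 : (if i = w ∧ j = u then (1:ℝ) else 0) = 0 := by rw [if_neg]; tauto
        rw [e0, e1, e2, e3, e4]
        have hcond : ¬(((T.Adj i j ∧ ¬(i = v ∧ j = w ∨ i = w ∧ j = v)) ∨
            (i = u ∧ j = w ∨ i = w ∧ j = u)) ∧ ¬i = j) := by tauto
        rw [if_neg hcond]
        norm_num

lemma quad_rotate {T : SimpleGraph (Fin n)} {u v w : Fin n}
    (huv : u ≠ v) (hvw : v ≠ w) (huw : u ≠ w)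
    (hTvw : T.Adj v w) (hTuw : ¬ T.Adj u w) (z : Fin n → ℝ) :
    z ⬝ᵥ (adjMat (SimpleGraph.fromEdgeSet ((T.edgeSet \ {s(v, w)}) ∪ {s(u, w)})) *ᵥ z) =
      z ⬝ᵥ (adjMat T *ᵥ z) + 2 * z w * (z u - z v) := by
  rw [adjMat_rotate huv hvw huw hTvw hTuw, Matrix.add_mulVec, Matrix.sub_mulVec,
    dotProduct_add, dotProduct_sub, dot_pairMat v w hvw z,
    dot_pairMat u w huw z]
  ring

end Surgery

/-- The rotation lemma: rotating the edge `vw` to `uw` strictly increases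
`α λ₁ + (1 - α) λ₂` under the stated eigenvector condition. -/
theorem rotation_alpha {n : ℕ} (T : SimpleGraph (Fin n)) (hT : T.IsTree)
    (α : ℝ) (hα : 1 / 2 ≤ α) (hα1 : α ≤ 1)
    (x y : Fin n → ℝ)
    (hx : (adjMat T).mulVec x = lam 1 T • x) (hxunit : ∑ i, x i ^ 2 = 1)
    (hxpos : ∀ i, 0 < x i)
    (hy : (adjMat T).mulVec y = lam 2 T • y) (hyunit : ∑ i, y i ^ 2 = 1)
    (u v w : Fin n) (huv : T.Adj u v) (hvw : T.Adj v w) (huw : u ≠ w)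
    (hcond : α * x w * (x u - x v) + (1 - α) * y w * (y u - y v) > 0) :
    α * lam 1 (SimpleGraph.fromEdgeSet ((T.edgeSet \ {s(v, w)}) ∪ {s(u, w)})) +
      (1 - α) * lam 2 (SimpleGraph.fromEdgeSet ((T.edgeSet \ {s(v, w)}) ∪ {s(u, w)})) >
    α * lam 1 T + (1 - α) * lam 2 T := by
  have hn : 2 ≤ n := by
    by_contra h
    push_neg at h
    interval_cases n
    · exact u.elim0
    · exact huw (Subsingleton.elim u w)
  set T' := SimpleGraph.fromEdgeSet ((T.edgeSet \ {s(v, w)}) ∪ {s(u, w)}) with hT'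
  have hTuw : ¬ T.Adj u w := tree_no_triangle hT huv hvw huw
  have hxx : x ⬝ᵥ x = 1 := by
    rw [dotProduct, ← hxunit]
    exact Finset.sum_congr rfl fun i _ => by ring
  have hyy : y ⬝ᵥ y = 1 := by
    rw [dotProduct, ← hyunit]
    exact Finset.sum_congr rfl fun i _ => by ring
  have hgap : lam 2 T < lam 1 T := perron_gap T hT hn x hx hxunit hxpos
  have hxy : x ⬝ᵥ y = 0 := by
    have h1 : (adjMat T *ᵥ x) ⬝ᵥ y = x ⬝ᵥ (adjMat T *ᵥ y) := sym_dot (adjMat_isHermitian T) x y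
    rw [hx, hy, smul_dotProduct, dotProduct_smul, smul_eq_mul, smul_eq_mul] at h1
    by_contra hne
    have : lam 1 T = lam 2 T := by
      exact mul_right_cancel₀ hne h1
    linarith
  have hQx : x ⬝ᵥ (adjMat T *ᵥ x) = lam 1 T := by
    rw [hx, dotProduct_smul, smul_eq_mul, hxx, mul_one]
  have hQy : y ⬝ᵥ (adjMat T *ᵥ y) = lam 2 T := by
    rw [hy, dotProduct_smul, smul_eq_mul, hyy, mul_one]
  have hQx' : x ⬝ᵥ (adjMat T' *ᵥ x) = lam 1 T + 2 * x w * (x u - x v) := by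
    rw [hT', quad_rotate huv.ne hvw.ne huw hvw hTuw x, hQx]
  have hQy' : y ⬝ᵥ (adjMat T' *ᵥ y) = lam 2 T + 2 * y w * (y u - y v) := by
    rw [hT', quad_rotate huv.ne hvw.ne huw hvw hTuw y, hQy]
  have hKF := kyfan T' hn α hα hα1 x y hxx hyy hxy
  rw [hQx', hQy'] at hKF
  nlinarith [hKF, hcond]
end

section
/- Let T be a tree, let λ be a real number, and let z be a vector indexed by the vertices of T satisfying A(T)z = λz, where A(T) is the adjacency matrix of T. Then for every vertex u of T, λ·(λ² - deg(u))·z_u = Σ_{v ∈ N(u)} z_v·(deg(v) - 1) + Σ_{v : d(u,v)=3} z_v, where N(u) denotes the set of neighbours of u, the second sum is over all vertices v at distance exactly 3 from u, and deg denotes degree in T. -/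
open scoped Classical

namespace TreeAux
variable {n : ℕ} {T : SimpleGraph (Fin n)}

lemma mem_support_dist_le {u v x : Fin n} (p : T.Walk v u) (hp : p.length = T.dist v u)
    (hx : x ∈ p.support) : T.dist x u ≤ T.dist v u := by
  have h1 : T.dist x u ≤ (p.dropUntil x hx).length := SimpleGraph.dist_le _
  have h2 := congrArg SimpleGraph.Walk.length (p.take_spec hx)
  rw [SimpleGraph.Walk.length_append] at h2
  omega

lemma mem_support_dist_lt {u v x : Fin n} (p : T.Walk v u) (hp : p.length = T.dist v u)
    (hx : x ∈ p.support) (hne : x ≠ v) : T.dist x u < T.dist v u := by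
  have h1 : T.dist x u ≤ (p.dropUntil x hx).length := SimpleGraph.dist_le _
  have h2 := congrArg SimpleGraph.Walk.length (p.take_spec hx)
  rw [SimpleGraph.Walk.length_append] at h2
  have h3 : (p.takeUntil x hx).length ≠ 0 := fun h0 =>
    hne (SimpleGraph.Walk.eq_of_length_eq_zero h0).symm
  omega

lemma adj_dist_ne (hT : T.IsTree) (u : Fin n) {v w : Fin n} (h : T.Adj v w) :
    T.dist u v ≠ T.dist u w := by
  intro he
  obtain ⟨p, hp, hpl⟩ := hT.isConnected.exists_path_of_dist v u
  obtain ⟨q, hq, hql⟩ := hT.isConnected.exists_path_of_dist w u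
  have hwv : T.dist w u = T.dist v u := by
    rw [SimpleGraph.dist_comm, ← he, SimpleGraph.dist_comm]
  have hw : w ∉ p.support := by
    intro hmem
    have := mem_support_dist_lt p hpl hmem h.ne'
    omega
  have hcons : (SimpleGraph.Walk.cons h.symm p).IsPath := hp.cons hw
  have heq := (hT.existsUnique_path w u).unique hcons hq
  have := congrArg SimpleGraph.Walk.length heq
  rw [SimpleGraph.Walk.length_cons, hpl, hql] at this
  omega

lemma exists_adj_dist (hc : T.Connected) {u w : Fin n} {k : ℕ} (hw : T.dist u w = k + 1) :
    ∃ v, T.Adj w v ∧ T.dist u v = k := by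
  obtain ⟨p, hp, hpl⟩ := hc.exists_path_of_dist w u
  have hwu : T.dist w u = k + 1 := by rw [SimpleGraph.dist_comm]; exact hw
  cases p with
  | nil => rw [hwu] at hpl; simp at hpl
  | @cons _ x _ hadj q =>
    refine ⟨x, hadj, ?_⟩
    rw [SimpleGraph.Walk.length_cons, hwu] at hpl
    have h1 : T.dist x u ≤ k := by
      have := SimpleGraph.dist_le q
      omega
    have h2 : T.dist u w ≤ T.dist u x + T.dist x w := hc.dist_triangle
    have h3 : T.dist x w = 1 := SimpleGraph.dist_eq_one_iff_adj.2 hadj.symm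
    have h4 : T.dist u x = T.dist x u := SimpleGraph.dist_comm
    omega

lemma adj_dist_cases (hT : T.IsTree) (u : Fin n) {v w : Fin n} (h : T.Adj v w) :
    T.dist u w = T.dist u v + 1 ∨ T.dist u w + 1 = T.dist u v := by
  have h1 : T.dist u w ≤ T.dist u v + T.dist v w := hT.isConnected.dist_triangle
  have h2 : T.dist u v ≤ T.dist u w + T.dist w v := hT.isConnected.dist_triangle
  have h3 : T.dist v w = 1 := SimpleGraph.dist_eq_one_iff_adj.2 h
  have h4 : T.dist w v = 1 := SimpleGraph.dist_eq_one_iff_adj.2 h.symm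
  have h5 := adj_dist_ne hT u h
  omega

lemma adj_dist_unique (hT : T.IsTree) {u w v₁ v₂ : Fin n} (h1 : T.Adj w v₁) (h2 : T.Adj w v₂)
    (hd1 : T.dist u v₁ + 1 = T.dist u w) (hd2 : T.dist u v₂ + 1 = T.dist u w) : v₁ = v₂ := by
  obtain ⟨p, hp, hpl⟩ := hT.isConnected.exists_path_of_dist v₁ u
  obtain ⟨q, hq, hql⟩ := hT.isConnected.exists_path_of_dist v₂ u
  have hwu : T.dist w u = T.dist u w := SimpleGraph.dist_comm
  have hw1 : w ∉ p.support := by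
    intro hmem
    have h5 := mem_support_dist_le p hpl hmem
    have h6 : T.dist v₁ u = T.dist u v₁ := SimpleGraph.dist_comm
    omega
  have hw2 : w ∉ q.support := by
    intro hmem
    have h5 := mem_support_dist_le q hql hmem
    have h6 : T.dist v₂ u = T.dist u v₂ := SimpleGraph.dist_comm
    omega
  have hc1 : (SimpleGraph.Walk.cons h1 p).IsPath := hp.cons hw1
  have hc2 : (SimpleGraph.Walk.cons h2 q).IsPath := hq.cons hw2
  have heq := (hT.existsUnique_path w u).unique hc1 hc2
  have := congrArg (fun r : T.Walk w u => r.getVert 1) heq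
  simpa [SimpleGraph.Walk.getVert_cons_succ, SimpleGraph.Walk.getVert_zero] using this

lemma card_down (hT : T.IsTree) {u w : Fin n} {k : ℕ} (hw : T.dist u w = k + 1) :
    (Finset.univ.filter (fun v => T.Adj w v ∧ T.dist u v = k)).card = 1 := by
  obtain ⟨v, hv1, hv2⟩ := exists_adj_dist hT.isConnected hw
  rw [Finset.card_eq_one]
  refine ⟨v, ?_⟩
  ext x
  simp only [Finset.mem_filter, Finset.mem_univ, true_and, Finset.mem_singleton]
  constructor
  · rintro ⟨hx1, hx2⟩
    exact adj_dist_unique hT (u := u) hx1 hv1 (by omega) (by omega)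
  · rintro rfl; exact ⟨hv1, hv2⟩

lemma double_count (f : Fin n → ℝ) (A : Finset (Fin n)) (Q : Fin n → Prop)
    (R : Fin n → Fin n → Prop) [DecidablePred Q] [∀ v w, Decidable (R v w)] :
    ∑ v ∈ A, ∑ w ∈ Finset.univ.filter (fun w => R v w ∧ Q w), f w
      = ∑ w ∈ Finset.univ.filter Q, ((A.filter (fun v => R v w)).card : ℝ) * f w := by
  have step1 : ∀ v, ∑ w ∈ Finset.univ.filter (fun w => R v w ∧ Q w), f w
      = ∑ w ∈ Finset.univ.filter Q, if R v w then f w else 0 := by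
    intro v
    rw [Finset.sum_filter, Finset.sum_filter]
    refine Finset.sum_congr rfl fun w _ => ?_
    by_cases hq : Q w <;> by_cases hr : R v w <;> simp [hq, hr]
  simp_rw [step1]
  rw [Finset.sum_comm]
  refine Finset.sum_congr rfl fun w _ => ?_
  rw [← Finset.sum_filter, Finset.sum_const, nsmul_eq_mul]

lemma split_nbrs (u : Fin n) (a b : ℕ) (v : Fin n) (f : Fin n → ℝ)
    (h : ∀ w, T.Adj v w → T.dist u w = a ∨ T.dist u w = b) (hab : a ≠ b) :
    ∑ w ∈ Finset.univ.filter (fun w => T.Adj v w), f w =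
      (∑ w ∈ Finset.univ.filter (fun w => T.Adj v w ∧ T.dist u w = a), f w)
      + ∑ w ∈ Finset.univ.filter (fun w => T.Adj v w ∧ T.dist u w = b), f w := by
  rw [← Finset.sum_filter_add_sum_filter_not (Finset.univ.filter (fun w => T.Adj v w))
    (fun w => T.dist u w = a) f]
  rw [Finset.filter_filter, Finset.filter_filter]
  congr 1
  refine Finset.sum_congr (Finset.filter_congr fun w _ => ?_) fun _ _ => rfl
  constructor
  · rintro ⟨h1, h2⟩
    exact ⟨h1, (h w h1).resolve_left h2⟩
  · rintro ⟨h1, h2⟩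
    exact ⟨h1, by rw [h2]; exact fun hh => hab hh.symm⟩

end TreeAux

/-- The eigenvalue–eigenvector equation at distance three in a tree:
`λ (λ² - deg(u)) z_u = ∑_{v ∈ N(u)} z_v (deg(v) - 1) + ∑_{d(u,v)=3} z_v`. -/
theorem eigenvalue_equation_dist_three {n : ℕ} (T : SimpleGraph (Fin n)) (hT : T.IsTree)
    (μ : ℝ) (z : Fin n → ℝ) (hz : (adjMat T).mulVec z = μ • z) (u : Fin n) :
    μ * (μ ^ 2 - (deg T u : ℝ)) * z u =
      (∑ v ∈ Finset.univ.filter (fun v => T.Adj u v), z v * ((deg T v : ℝ) - 1)) +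
        ∑ v ∈ Finset.univ.filter (fun v => T.dist u v = 3), z v := by
  classical
  have hc := hT.isConnected
  have key : ∀ i, ∑ j ∈ Finset.univ.filter (fun j => T.Adj i j), z j = μ * z i := by
    intro i
    have h := congrFun hz i
    simp only [Matrix.mulVec, dotProduct, adjMat, Pi.smul_apply, smul_eq_mul,
      ite_mul, one_mul, zero_mul] at h
    rw [Finset.sum_filter]
    exact h
  have hD1N : Finset.univ.filter (fun v => T.dist u v = 1)
      = Finset.univ.filter (fun v => T.Adj u v) :=
    Finset.filter_congr fun v _ => SimpleGraph.dist_eq_one_iff_adj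
  have hA : ∑ v ∈ Finset.univ.filter (fun v => T.dist u v = 1), z v = μ * z u := by
    rw [hD1N]; exact key u
  -- a generic conversion of filters
  have hconv : ∀ (w : Fin n) (k : ℕ),
      (Finset.univ.filter (fun v => T.dist u v = k)).filter (fun v => T.Adj v w)
        = Finset.univ.filter (fun v => T.Adj w v ∧ T.dist u v = k) := by
    intro w k
    rw [Finset.filter_filter]
    refine Finset.filter_congr fun v _ => ?_
    constructor
    · rintro ⟨a, b⟩; exact ⟨b.symm, a⟩
    · rintro ⟨a, b⟩; exact ⟨b, a.symm⟩
  have hdeg1 : ∀ x, T.dist u x = 1 →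
      ((Finset.univ.filter (fun w => T.Adj x w ∧ T.dist u w = 2)).card : ℝ)
        = (deg T x : ℝ) - 1 := by
    intro x hx
    have hsplit := TreeAux.split_nbrs u 0 2 x (fun _ => (1 : ℝ))
      (fun w hw => by have := TreeAux.adj_dist_cases hT u hw; omega) (by omega)
    have h0 : Finset.univ.filter (fun w => T.Adj x w ∧ T.dist u w = 0) = {u} := by
      ext w
      simp only [Finset.mem_filter, Finset.mem_univ, true_and, Finset.mem_singleton]
      constructor
      · rintro ⟨_, h2⟩; exact (hc.dist_eq_zero_iff.1 h2).symm
      · rintro rfl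
        exact ⟨(SimpleGraph.dist_eq_one_iff_adj.1 hx).symm, SimpleGraph.dist_self⟩
    rw [h0] at hsplit
    simp only [Finset.sum_const, Finset.sum_singleton, nsmul_eq_mul, mul_one,
      Finset.card_singleton, Nat.cast_one] at hsplit
    have hdeg : ((Finset.univ.filter (fun w => T.Adj x w)).card : ℝ) = (deg T x : ℝ) := by
      simp [deg]
    rw [hdeg] at hsplit
    linarith
  -- Step B
  have hB : μ * (μ * z u) = (deg T u : ℝ) * z u
      + ∑ w ∈ Finset.univ.filter (fun w => T.dist u w = 2), z w := by
    rw [← hA, Finset.mul_sum]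
    rw [Finset.sum_congr rfl (fun v (_ : v ∈ _) => (key v).symm)]
    have e2 : ∀ v ∈ Finset.univ.filter (fun v => T.dist u v = 1),
        ∑ w ∈ Finset.univ.filter (fun w => T.Adj v w), z w
          = (∑ w ∈ Finset.univ.filter (fun w => T.Adj v w ∧ T.dist u w = 0), z w)
            + ∑ w ∈ Finset.univ.filter (fun w => T.Adj v w ∧ T.dist u w = 2), z w := by
      intro v hv
      rw [Finset.mem_filter] at hv
      refine TreeAux.split_nbrs u 0 2 v z (fun w hw => ?_) (by omega)
      have := TreeAux.adj_dist_cases hT u hw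
      omega
    rw [Finset.sum_congr rfl e2, Finset.sum_add_distrib]
    congr 1
    · refine (TreeAux.double_count z _ (fun w => T.dist u w = 0) (fun v w => T.Adj v w)).trans ?_
      have h0 : Finset.univ.filter (fun w => T.dist u w = 0) = {u} := by
        ext w
        simp only [Finset.mem_filter, Finset.mem_univ, true_and, Finset.mem_singleton]
        constructor
        · intro h2; exact (hc.dist_eq_zero_iff.1 h2).symm
        · rintro rfl; exact SimpleGraph.dist_self
      rw [h0, Finset.sum_singleton, hconv u 1]
      congr 1
      have : Finset.univ.filter (fun v => T.Adj u v ∧ T.dist u v = 1)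
          = Finset.univ.filter (fun v => T.Adj u v) :=
        Finset.filter_congr fun v _ =>
          ⟨fun h => h.1, fun h => ⟨h, SimpleGraph.dist_eq_one_iff_adj.2 h⟩⟩
      rw [this]
      simp [deg]
    · refine (TreeAux.double_count z _ (fun w => T.dist u w = 2) (fun v w => T.Adj v w)).trans ?_
      refine Finset.sum_congr rfl fun w hw => ?_
      rw [Finset.mem_filter] at hw
      rw [hconv w 1, TreeAux.card_down hT (k := 1) (by omega)]
      norm_num
  -- Step C
  have hC : μ * ∑ w ∈ Finset.univ.filter (fun w => T.dist u w = 2), z w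
      = (∑ v ∈ Finset.univ.filter (fun v => T.Adj u v), z v * ((deg T v : ℝ) - 1))
        + ∑ v ∈ Finset.univ.filter (fun v => T.dist u v = 3), z v := by
    rw [Finset.mul_sum]
    rw [Finset.sum_congr rfl (fun v (_ : v ∈ _) => (key v).symm)]
    have e2 : ∀ v ∈ Finset.univ.filter (fun v => T.dist u v = 2),
        ∑ w ∈ Finset.univ.filter (fun w => T.Adj v w), z w
          = (∑ w ∈ Finset.univ.filter (fun w => T.Adj v w ∧ T.dist u w = 1), z w)
            + ∑ w ∈ Finset.univ.filter (fun w => T.Adj v w ∧ T.dist u w = 3), z w := by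
      intro v hv
      rw [Finset.mem_filter] at hv
      refine TreeAux.split_nbrs u 1 3 v z (fun w hw => ?_) (by omega)
      have := TreeAux.adj_dist_cases hT u hw
      omega
    rw [Finset.sum_congr rfl e2, Finset.sum_add_distrib]
    congr 1
    · refine (TreeAux.double_count z _ (fun w => T.dist u w = 1) (fun v w => T.Adj v w)).trans ?_
      rw [hD1N]
      refine Finset.sum_congr rfl fun x hx => ?_
      rw [Finset.mem_filter] at hx
      have hx1 : T.dist u x = 1 := SimpleGraph.dist_eq_one_iff_adj.2 hx.2
      rw [hconv x 2, hdeg1 x hx1]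
      ring
    · refine (TreeAux.double_count z _ (fun w => T.dist u w = 3) (fun v w => T.Adj v w)).trans ?_
      refine Finset.sum_congr rfl fun w hw => ?_
      rw [Finset.mem_filter] at hw
      rw [hconv w 2, TreeAux.card_down hT (k := 2) (by omega)]
      norm_num
  have hS2 : ∑ w ∈ Finset.univ.filter (fun w => T.dist u w = 2), z w
      = (μ ^ 2 - (deg T u : ℝ)) * z u := by nlinarith [hB]
  calc μ * (μ ^ 2 - (deg T u : ℝ)) * z u
      = μ * ((μ ^ 2 - (deg T u : ℝ)) * z u) := by ring
    _ = μ * ∑ w ∈ Finset.univ.filter (fun w => T.dist u w = 2), z w := by rw [hS2]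
    _ = _ := hC
end
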